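/- arXiv:2307.07067 — 5 statements merged into one kernel-verified Lean document; each statement's English description precedes it below -/
import Mathlib

section
/- Let r > 1 and let f be a complex-valued function that is continuous on the closed Bernstein ellipse B_r and complex-differentiable on an open set containing B_r. Then for every nonnegative integer ℓ there exists a polynomial p_ℓ of degree at most ℓ such that max_{x ∈ [−1,1]} |f(x) − p_ℓ(x)| ≤ 2·(sup_{z ∈ B_r} |f(z)|)·r^{−ℓ}/(r − 1). -/
open Complex Metric Set intervalIntegral Real Polynomial


/-- The closed Bernstein ellipse `B_r ⊆ ℂ`: the image of the closed annulus
`{z : 1 ≤ |z| ≤ r}` under the Joukowski map `z ↦ (z + z⁻¹)/2`. -/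
def bernsteinEllipse (r : ℝ) : Set ℂ :=
  (fun z : ℂ => (z + z⁻¹) / 2) '' {z : ℂ | 1 ≤ ‖z‖ ∧ ‖z‖ ≤ r}

lemma natDegree_chebT_le : ∀ n : ℕ, (Polynomial.Chebyshev.T ℂ (n : ℤ)).natDegree ≤ n := by
  intro n
  induction n using Nat.strong_induction_on with
  | _ n ih =>
    match n with
    | 0 => simp [Polynomial.Chebyshev.T_zero]
    | 1 => simpa [Polynomial.Chebyshev.T_one] using Polynomial.natDegree_X_le
    | (m+2) =>
      have hcast : ((m+2 : ℕ) : ℤ) = (m : ℤ) + 2 := by push_cast; ring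
      rw [hcast, Polynomial.Chebyshev.T_add_two]
      refine le_trans (Polynomial.natDegree_sub_le _ _) (max_le ?_ ?_)
      · refine le_trans (Polynomial.natDegree_mul_le) ?_
        have h1 : (Polynomial.Chebyshev.T ℂ ((m:ℤ)+1)).natDegree ≤ m + 1 := by
          have := ih (m+1) (by omega)
          rwa [show ((m+1 : ℕ) : ℤ) = (m:ℤ)+1 by push_cast; ring] at this
        have h2 : ((2 : ℂ[X]) * Polynomial.X).natDegree ≤ 1 := by
          refine le_trans (Polynomial.natDegree_mul_le) ?_
          simp [Polynomial.natDegree_X]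
        omega
      · exact le_trans (ih m (by omega)) (by omega)

/-- Trefethen, Theorem 8.2: if `f` is continuous on the closed Bernstein ellipse `B_r`
(`r > 1`) and complex-differentiable on an open set containing it, then for every `ℓ`
there is a polynomial `p_ℓ` of degree at most `ℓ` with
`max_{x ∈ [−1,1]} |f(x) − p_ℓ(x)| ≤ 2 (sup_{z ∈ B_r} |f(z)|) r^{−ℓ}/(r−1)`. -/
theorem bernstein_polynomial_approximation (r : ℝ) (hr : 1 < r) (f : ℂ → ℂ)
    (hf_cont : ContinuousOn f (bernsteinEllipse r))
    (U : Set ℂ) (hU : IsOpen U) (hBU : bernsteinEllipse r ⊆ U)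
    (hf_diff : DifferentiableOn ℂ f U) :
    ∀ ℓ : ℕ, ∃ p : Polynomial ℂ, p.natDegree ≤ ℓ ∧
      ∀ x : ℝ, x ∈ Set.Icc (-1 : ℝ) 1 →
        ‖f x - p.eval (x : ℂ)‖ ≤
          2 * (sSup ((fun z => ‖f z‖) '' bernsteinEllipse r)) *
            r ^ (-(ℓ : ℤ)) / (r - 1) := by
  intro ℓ
  haveI : Fact (0 < 2 * π) := ⟨by positivity⟩
  have hr0 : (0:ℝ) < r := lt_trans one_pos hr
  have hrinv : r⁻¹ < 1 := inv_lt_one_of_one_lt₀ hr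
  have hrinv0 : (0:ℝ) < r⁻¹ := by positivity
  set M : ℝ := sSup ((fun z => ‖f z‖) '' bernsteinEllipse r) with hM
  -- membership of Joukowski images
  have hJmem : ∀ z : ℂ, r⁻¹ ≤ ‖z‖ → ‖z‖ ≤ r →
      (z + z⁻¹)/2 ∈ bernsteinEllipse r := by
    intro z h1 h2
    rcases le_or_gt 1 (‖z‖) with h | h
    · exact ⟨z, ⟨h, h2⟩, rfl⟩
    · have hz0 : (0:ℝ) < ‖z‖ := lt_of_lt_of_le hrinv0 h1
      refine ⟨z⁻¹, ⟨?_, ?_⟩, ?_⟩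
      · rw [norm_inv]
        exact (one_le_inv₀ hz0).mpr h.le
      · rw [norm_inv]
        calc ‖z‖⁻¹ ≤ (r⁻¹)⁻¹ := inv_anti₀ hrinv0 h1
          _ = r := inv_inv r
      · simp only [inv_inv]
        ring_nf
  -- compactness of the Bernstein ellipse
  have hBcomp : IsCompact (bernsteinEllipse r) := by
    have h1 : IsCompact {z : ℂ | 1 ≤ ‖z‖ ∧ ‖z‖ ≤ r} := by
      apply Metric.isCompact_of_isClosed_isBounded
      · exact (isClosed_le continuous_const continuous_norm).inter
          (isClosed_le continuous_norm continuous_const)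
      · refine (Metric.isBounded_closedBall (x := (0:ℂ)) (r := r)).subset fun z hz => ?_
        exact mem_closedBall_zero_iff.mpr hz.2
    refine h1.image_of_continuousOn ?_
    intro z hz
    have hz0 : z ≠ 0 := by
      intro h
      rw [h] at hz
      simp at hz
      linarith [hz.1]
    exact ((continuousAt_id.add (continuousAt_inv₀ hz0)).div_const 2).continuousWithinAt
  -- boundedness of |f| on the ellipse
  have hMb : ∀ w ∈ bernsteinEllipse r, ‖f w‖ ≤ M := by
    intro w hw
    refine le_csSup ?_ ⟨w, hw, rfl⟩
    exact hBcomp.bddAbove_image (continuous_norm.comp_continuousOn hf_cont)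
  have h1mem : (1:ℂ) ∈ bernsteinEllipse r := by
    refine ⟨1, ⟨by simp, by simp; linarith⟩, by norm_num⟩
  have hM0 : 0 ≤ M := le_trans (norm_nonneg _) (hMb 1 h1mem)
  -- the periodic function and its lift
  have hper : Function.Periodic (fun θ : ℝ => f (Complex.cos θ)) (2*π) := by
    intro θ; simp only []
    congr 1
    push_cast
    exact Complex.cos_add_two_pi _
  set H : AddCircle (2*π) → ℂ := hper.lift with hHdef
  have hHcoe : ∀ θ : ℝ, H ↑θ = f (Complex.cos θ) := fun θ => hper.lift_coe θ
  have hfour : ∀ (n : ℤ) (θ : ℝ),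
      (fourier n (↑θ : AddCircle (2*π)) : ℂ) = Complex.exp (n * θ * I) := by
    intro n θ
    rw [fourier_coe_apply]
    congr 1
    have hπ : (π:ℂ) ≠ 0 := Complex.ofReal_ne_zero.mpr Real.pi_ne_zero
    field_simp
    push_cast
    ring
  have hcosid : ∀ θ : ℝ, (Complex.exp (↑θ*I) + (Complex.exp (↑θ*I))⁻¹)/2 = Complex.cos ↑θ := by
    intro θ
    rw [← Complex.exp_neg, Complex.cos]
    ring_nf
  have hcos_mem : ∀ θ : ℝ, Complex.cos ↑θ ∈ bernsteinEllipse r := by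
    intro θ
    have h1 : ‖Complex.exp (↑θ*I)‖ = 1 := Complex.norm_exp_ofReal_mul_I θ
    have := hJmem (Complex.exp (↑θ*I)) (by rw [h1]; linarith) (by rw [h1]; linarith)
    rwa [hcosid θ] at this
  -- continuity of H
  have hHcont : Continuous H := by
    have hc : Continuous (fun θ : ℝ => f (Complex.cos θ)) := by
      rw [continuous_iff_continuousAt]
      intro θ
      have h1 : ContinuousAt f (Complex.cos θ) :=
        hf_diff.continuousOn.continuousAt (hU.mem_nhds (hBU (hcos_mem θ)))
      have h2 : ContinuousAt (fun t : ℝ => Complex.cos ↑t) θ :=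
        (Complex.continuous_cos.comp Complex.continuous_ofReal).continuousAt
      show ContinuousAt (f ∘ fun t : ℝ => Complex.cos ↑t) θ
      exact ContinuousAt.comp (x := θ) h1 h2
    exact hc.quotient_liftOn' _
  set c : ℤ → ℂ := fourierCoeff H with hcdef
  -- the key circle-integral identity
  have key : ∀ k : ℤ, (∮ z in C((0:ℂ),1), f ((z+z⁻¹)/2) * z ^ (-k-1)) = (2*π*I) * c k := by
    intro k
    rw [hcdef, fourierCoeff_eq_intervalIntegral H k 0]
    have h1 : EqOn (fun θ : ℝ => deriv (circleMap 0 1) θ •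
        (f ((circleMap 0 1 θ + (circleMap 0 1 θ)⁻¹)/2) * circleMap 0 1 θ ^ (-k-1)))
        (fun θ : ℝ => I • ((fourier (-k) (↑θ : AddCircle (2*π))) • H ↑θ)) (Set.uIcc 0 (2*π)) := by
      intro θ _
      simp only [deriv_circleMap, circleMap, zero_add, Complex.ofReal_one, one_mul,
        smul_eq_mul, hHcoe, hfour]
      rw [← Complex.exp_int_mul, hcosid θ]
      rw [show Complex.exp (↑θ*I) * I * (f (Complex.cos ↑θ) * Complex.exp (↑(-k-1) * (↑θ*I)))
          = I * ((Complex.exp (↑θ*I) * Complex.exp (↑(-k-1) * (↑θ*I))) * f (Complex.cos ↑θ)) by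
            ring, ← Complex.exp_add]
      congr 2
      push_cast
      ring
    calc (∮ z in C((0:ℂ),1), f ((z+z⁻¹)/2) * z ^ (-k-1))
        = ∫ θ in (0:ℝ)..2*π, I • ((fourier (-k) (↑θ : AddCircle (2*π))) • H ↑θ) := by
          rw [circleIntegral]
          exact intervalIntegral.integral_congr h1
      _ = I • ∫ θ in (0:ℝ)..2*π, (fourier (-k) (↑θ : AddCircle (2*π))) • H ↑θ := by
          rw [intervalIntegral.integral_smul]
      _ = (2*π*I) * ((1 / (2*π) : ℝ) •
            ∫ θ in (0:ℝ)..0+2*π, (fourier (-k) (↑θ : AddCircle (2*π))) • H ↑θ) := by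
          rw [zero_add, Complex.real_smul, smul_eq_mul]
          push_cast
          have hπ : (π:ℂ) ≠ 0 := Complex.ofReal_ne_zero.mpr Real.pi_ne_zero
          field_simp
  -- differentiability of the integrand on the annulus
  have hFd : ∀ (k : ℤ) (z : ℂ), r⁻¹ ≤ ‖z‖ → ‖z‖ ≤ r →
      DifferentiableAt ℂ (fun w : ℂ => f ((w+w⁻¹)/2) * w ^ (-k-1)) z := by
    intro k z h1 h2
    have hz0 : z ≠ 0 := by
      intro h
      rw [h] at h1
      simp at h1
      linarith
    have hd1 : DifferentiableAt ℂ (fun w : ℂ => (w+w⁻¹)/2) z :=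
      (differentiableAt_id.add (differentiableAt_inv hz0)).div_const 2
    have hd2 : DifferentiableAt ℂ f ((z+z⁻¹)/2) :=
      hf_diff.differentiableAt (hU.mem_nhds (hBU (hJmem z h1 h2)))
    exact (hd2.comp z hd1).mul (differentiableAt_zpow.mpr (Or.inl hz0))
  -- the main coefficient bound
  have hmain : ∀ (k : ℤ) (s : ℝ), r⁻¹ ≤ s → s ≤ r → 0 < s → ‖c k‖ ≤ M * s ^ (-k) := by
    intro k s hs1 hs2 hs0
    have hcont_ann : ∀ a b : ℝ, r⁻¹ ≤ a → b ≤ r →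
        ContinuousOn (fun w : ℂ => f ((w+w⁻¹)/2) * w ^ (-k-1))
          (closedBall (0:ℂ) b \ ball (0:ℂ) a) := by
      intro a b ha hb z hz
      simp only [mem_diff, mem_closedBall_zero_iff, mem_ball_zero_iff, not_lt] at hz
      exact ((hFd k z (le_trans ha hz.2) (le_trans hz.1 hb)).continuousAt).continuousWithinAt
    have hdiff_ann : ∀ a b : ℝ, r⁻¹ ≤ a → b ≤ r →
        ∀ z ∈ (ball (0:ℂ) b \ closedBall (0:ℂ) a) \ (∅ : Set ℂ),
          DifferentiableAt ℂ (fun w : ℂ => f ((w+w⁻¹)/2) * w ^ (-k-1)) z := by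
      intro a b ha hb z hz
      simp only [diff_empty, mem_diff, mem_ball_zero_iff, mem_closedBall_zero_iff, not_le] at hz
      exact hFd k z (le_trans ha hz.2.le) (le_trans hz.1.le hb)
    have heq : (∮ z in C((0:ℂ),1), f ((z+z⁻¹)/2) * z ^ (-k-1))
        = (∮ z in C((0:ℂ),s), f ((z+z⁻¹)/2) * z ^ (-k-1)) := by
      rcases le_total s 1 with h | h
      · exact circleIntegral_eq_of_differentiable_on_annulus_off_countable hs0 h countable_empty
          (hcont_ann s 1 hs1 hr.le) (hdiff_ann s 1 hs1 hr.le)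
      · exact (circleIntegral_eq_of_differentiable_on_annulus_off_countable one_pos h
          countable_empty (hcont_ann 1 s (le_trans hrinv.le le_rfl) hs2)
          (hdiff_ann 1 s (le_trans hrinv.le le_rfl) hs2)).symm
    have hsp : ∀ z ∈ sphere (0:ℂ) s, ‖f ((z+z⁻¹)/2) * z ^ (-k-1)‖ ≤ M * s ^ (-k-1) := by
      intro z hz
      have habs : ‖z‖ = s := by
        simpa using mem_sphere_zero_iff_norm.mp hz
      rw [norm_mul, norm_zpow]
      rw [habs]
      have hf1 : ‖f ((z+z⁻¹)/2)‖ ≤ M :=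
        hMb _ (hJmem z (habs ▸ hs1) (habs ▸ hs2))
      exact mul_le_mul_of_nonneg_right hf1 (zpow_nonneg hs0.le _)
    have hb2 : ‖∮ z in C((0:ℂ),s), f ((z+z⁻¹)/2) * z ^ (-k-1)‖ ≤ 2*π*s*(M * s ^ (-k-1)) :=
      circleIntegral.norm_integral_le_of_norm_le_const hs0.le hsp
    have hnorm2pi : ‖(2*(π:ℂ)*I)‖ = 2*π := by
      simp [abs_of_pos Real.pi_pos]
    have hchain : 2*π*‖c k‖ ≤ 2*π*(M * s ^ (-k)) := by
      have h1 : 2*π*‖c k‖ = ‖(2*(π:ℂ)*I) * c k‖ := by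
        rw [norm_mul, hnorm2pi]
      rw [h1, ← key k, heq]
      calc ‖∮ z in C((0:ℂ),s), f ((z+z⁻¹)/2) * z ^ (-k-1)‖
          ≤ 2*π*s*(M * s ^ (-k-1)) := hb2
        _ = 2*π*(M * s ^ (-k)) := by
            have : s * s ^ (-k-1) = s ^ (-k) := by
              have h3 : s ^ (-k) = s ^ ((-k-1)+1) := by congr 1; ring
              rw [h3, zpow_add_one₀ hs0.ne']
              ring
            calc 2*π*s*(M * s ^ (-k-1)) = 2*π*(M * (s * s ^ (-k-1))) := by ring
              _ = 2*π*(M * s ^ (-k)) := by rw [this]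
    have h2π : (0:ℝ) < 2*π := by positivity
    exact le_of_mul_le_mul_left hchain h2π
  -- coefficient bounds in geometric form
  have hgeo_pow : ∀ n : ℕ, r ^ (-(n:ℤ)) = (r⁻¹)^n := by
    intro n
    rw [zpow_neg, zpow_natCast, inv_pow]
  have hcn : ∀ n : ℕ, ‖c n‖ ≤ M * (r⁻¹)^n := by
    intro n
    have := hmain n r (by linarith) le_rfl hr0
    rwa [hgeo_pow n] at this
  have hcnn : ∀ n : ℕ, ‖c (-n)‖ ≤ M * (r⁻¹)^n := by
    intro n
    have := hmain (-n) r⁻¹ le_rfl (by linarith) hrinv0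
    rwa [neg_neg, zpow_natCast] at this
  -- summability
  have hgeo : Summable (fun n : ℕ => M * (r⁻¹)^n) :=
    (summable_geometric_of_lt_one hrinv0.le hrinv).mul_left M
  have hs1 : Summable (fun n : ℕ => c n) :=
    Summable.of_norm_bounded hgeo hcn
  have hs2 : Summable (fun n : ℕ => c (-(n+1))) := by
    refine Summable.of_norm_bounded hgeo fun n => ?_
    have h1 := hcnn (n+1)
    have h2 : M * (r⁻¹)^(n+1) ≤ M * (r⁻¹)^n := by
      apply mul_le_mul_of_nonneg_left _ hM0
      exact pow_le_pow_of_le_one hrinv0.le hrinv.le (by omega)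
    push_cast at h1
    exact le_trans h1 h2
  have hsumc : Summable c := Summable.of_nat_of_neg_add_one hs1 hs2
  -- evenness of coefficients
  have heven : ∀ k : ℤ, c (-k) = c k := by
    intro k
    rw [hcdef, fourierCoeff_eq_intervalIntegral H (-k) (-π),
      fourierCoeff_eq_intervalIntegral H k (-π)]
    congr 1
    have hlim : -π + 2*π = π := by ring
    rw [hlim, neg_neg]
    have hsub := intervalIntegral.integral_comp_neg
      (a := -π) (b := π) (fun x : ℝ => (fourier (-k) (↑x : AddCircle (2*π))) • H ↑x)
    rw [neg_neg] at hsub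
    rw [← hsub]
    apply intervalIntegral.integral_congr
    intro x _
    simp only [smul_eq_mul]
    have hHneg : H ↑(-x) = H ↑x := by
      rw [hHcoe, hHcoe]
      congr 1
      push_cast
      exact Complex.cos_neg _
    have hfneg : (fourier (-k) (↑(-x) : AddCircle (2*π)) : ℂ)
        = (fourier k (↑x : AddCircle (2*π)) : ℂ) := by
      rw [hfour, hfour]
      push_cast
      ring_nf
    rw [hHneg, hfneg]
  -- pointwise Fourier expansion
  set HC : C(AddCircle (2*π), ℂ) := ⟨H, hHcont⟩ with hHC
  have hpoint : ∀ ξ : AddCircle (2*π), HasSum (fun k : ℤ => c k • fourier k ξ) (H ξ) := by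
    intro ξ
    have := has_pointwise_sum_fourier_series_of_summable (f := HC) (by exact hsumc) ξ
    exact this
  -- define the polynomial
  refine ⟨Polynomial.C (c 0) + ∑ k ∈ Finset.range ℓ,
      Polynomial.C (2 * c (k+1)) * Polynomial.Chebyshev.T ℂ ((k:ℤ)+1), ?_, ?_⟩
  · refine le_trans (Polynomial.natDegree_add_le _ _) (max_le (by simp) ?_)
    refine Polynomial.natDegree_sum_le_of_forall_le _ _ fun k hk => ?_
    refine le_trans (Polynomial.natDegree_mul_le) ?_
    have h1 : (Polynomial.Chebyshev.T ℂ ((k:ℤ)+1)).natDegree ≤ k + 1 := by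
      have := natDegree_chebT_le (k+1)
      rwa [show ((k+1 : ℕ) : ℤ) = (k:ℤ)+1 by push_cast; ring] at this
    have hk' : k + 1 ≤ ℓ := Finset.mem_range.mp hk
    simp only [Polynomial.natDegree_C, zero_add]
    omega
  · intro x hx
    set θ : ℝ := Real.arccos x with hθ
    have hxcos : (x : ℂ) = Complex.cos ↑θ := by
      rw [hθ, ← Complex.ofReal_cos, Real.cos_arccos hx.1 hx.2]
    set a : ℤ → ℂ := fun k => c k • fourier k (↑θ : AddCircle (2*π)) with hadef
    have hHa : HasSum a (f ↑x) := by
      have := hpoint (↑θ : AddCircle (2*π))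
      rwa [hHcoe θ, ← hxcos] at this
    set B : ℕ → ℂ := fun n => a n + a (-(n:ℤ)) with hBdef
    have hBsum : HasSum B (f ↑x + a 0) := hHa.nat_add_neg
    have ha0 : a 0 = c 0 := by
      simp [hadef, fourier_zero]
    have hBform : ∀ n : ℕ, B n = c n * (2 * Complex.cos ((n:ℂ) * θ)) := by
      intro n
      have h1 : a n = c n * Complex.exp ((n:ℂ) * θ * I) := by
        rw [hadef]; simp only [smul_eq_mul]; rw [hfour]; push_cast; ring_nf
      have h2 : a (-(n:ℤ)) = c n * Complex.exp (-((n:ℂ) * θ) * I) := by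
        rw [hadef]; simp only [smul_eq_mul]
        rw [heven n, hfour]
        push_cast
        ring_nf
      rw [hBdef]
      simp only [h1, h2]
      rw [Complex.cos]
      ring
    have hBnorm : ∀ n : ℕ, ‖B n‖ ≤ 2 * M * (r⁻¹)^n := by
      intro n
      rw [hBdef]
      calc ‖a n + a (-(n:ℤ))‖ ≤ ‖a n‖ + ‖a (-(n:ℤ))‖ := norm_add_le _ _
        _ ≤ M * (r⁻¹)^n + M * (r⁻¹)^n := by
            have hno : ∀ m : ℤ, ‖a m‖ = ‖c m‖ := by
              intro m
              rw [hadef]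
              simp only [norm_smul]
              rw [hfour]
              simp [Complex.norm_exp]
            rw [hno n, hno (-(n:ℤ))]
            exact add_le_add (hcn n) (hcnn n)
        _ = 2 * M * (r⁻¹)^n := by ring
    -- the polynomial evaluates to the partial sum
    have hpeval : (Polynomial.C (c 0) + ∑ k ∈ Finset.range ℓ,
        Polynomial.C (2 * c (k+1)) * Polynomial.Chebyshev.T ℂ ((k:ℤ)+1)).eval (x:ℂ)
        = (∑ n ∈ Finset.range (ℓ+1), B n) - c 0 := by
      rw [hxcos]
      rw [Polynomial.eval_add, Polynomial.eval_C, Polynomial.eval_finset_sum]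
      have hterm : ∀ k ∈ Finset.range ℓ,
          (Polynomial.C (2 * c (k+1)) * Polynomial.Chebyshev.T ℂ ((k:ℤ)+1)).eval
            (Complex.cos ↑θ) = B (k+1) := by
        intro k _
        rw [Polynomial.eval_mul, Polynomial.eval_C, Polynomial.Chebyshev.T_complex_cos]
        rw [hBform (k+1)]
        push_cast
        ring
      rw [Finset.sum_congr rfl hterm]
      rw [Finset.sum_range_succ']
      have hB0 : B 0 = c 0 * 2 := by
        rw [hBform 0]
        simp
      rw [hB0]
      ring
    -- tail estimate
    have hBsummable : Summable B := hBsum.summable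
    have htail := Summable.sum_add_tsum_nat_add (f := B) (ℓ+1) hBsummable
    have htsum : ∑' n, B n = f ↑x + c 0 := by rw [hBsum.tsum_eq, ha0]
    have hdiff : f ↑x - (Polynomial.C (c 0) + ∑ k ∈ Finset.range ℓ,
        Polynomial.C (2 * c (k+1)) * Polynomial.Chebyshev.T ℂ ((k:ℤ)+1)).eval (x:ℂ)
        = ∑' n, B (n + (ℓ+1)) := by
      rw [hpeval]
      have : (∑' n, B (n + (ℓ+1))) = (∑' n, B n) - ∑ n ∈ Finset.range (ℓ+1), B n := by
        rw [← htail]; ring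
      rw [this, htsum]
      ring
    have hgeo2 : Summable (fun n : ℕ => 2 * M * (r⁻¹)^(n + (ℓ+1))) := by
      have h1 : (fun n : ℕ => 2 * M * (r⁻¹)^(n + (ℓ+1)))
          = fun n : ℕ => (2 * M * (r⁻¹)^(ℓ+1)) * (r⁻¹)^n := by
        funext n
        rw [pow_add]
        ring
      rw [h1]
      exact (summable_geometric_of_lt_one hrinv0.le hrinv).mul_left _
    have hnormsum : Summable (fun n : ℕ => ‖B (n + (ℓ+1))‖) :=
      Summable.of_nonneg_of_le (fun n => norm_nonneg _) (fun n => hBnorm (n + (ℓ+1))) hgeo2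
    have hbound : ‖∑' n, B (n + (ℓ+1))‖ ≤ 2 * M * (r⁻¹)^(ℓ+1) * (1 - r⁻¹)⁻¹ := by
      calc ‖∑' n, B (n + (ℓ+1))‖ ≤ ∑' n, ‖B (n + (ℓ+1))‖ := norm_tsum_le_tsum_norm hnormsum
        _ ≤ ∑' n : ℕ, 2 * M * (r⁻¹)^(n + (ℓ+1)) :=
            Summable.tsum_le_tsum (fun n => hBnorm (n + (ℓ+1))) hnormsum hgeo2
        _ = 2 * M * (r⁻¹)^(ℓ+1) * (1 - r⁻¹)⁻¹ := by
            have h1 : (fun n : ℕ => 2 * M * (r⁻¹)^(n + (ℓ+1)))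
                = fun n : ℕ => (2 * M * (r⁻¹)^(ℓ+1)) * (r⁻¹)^n := by
              funext n
              rw [pow_add]
              ring
            rw [h1, tsum_mul_left, tsum_geometric_of_lt_one hrinv0.le hrinv]
    have hfinal : 2 * M * (r⁻¹)^(ℓ+1) * (1 - r⁻¹)⁻¹ = 2 * M * r ^ (-(ℓ:ℤ)) / (r - 1) := by
      rw [hgeo_pow ℓ, pow_succ]
      have hr1 : r - 1 ≠ 0 := by linarith
      have h1r : 1 - r⁻¹ ≠ 0 := by
        intro h
        have : r⁻¹ = 1 := by linarith
        rw [this] at hrinv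
        linarith
      field_simp
    rw [hdiff]
    rw [← hfinal]
    exact hbound
end

section
/- Let F : ℝ^N → ℝ^N be continuously differentiable in a neighborhood of a point n* with F(n*) = n*, and suppose that every eigenvalue (over ℂ) of the Jacobian matrix J = DF(n*) has real part strictly less than 1. Then there exist a damping parameter a ∈ (0,1], a real symmetric positive-definite matrix W ∈ ℝ^{N×N}, a constant c ∈ (0,1), and a radius γ > 0 such that, writing ‖x‖_W = √(xᵀ W x), the damped map F̃(n) = (1−a)·n + a·F(n) satisfies ‖F̃(n₁) − F̃(n₂)‖_W ≤ c·‖n₁ − n₂‖_W for all n₁, n₂ in the ball {n ∈ ℝ^N : ‖n − n*‖_W ≤ γ}. -/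
open Matrix

open Filter Pointwise

namespace DampedAux
variable {N : ℕ}

lemma dot_self_nonneg (x : Fin N → ℝ) : 0 ≤ x ⬝ᵥ x :=
  Finset.sum_nonneg fun i _ => mul_self_nonneg _

lemma dot_self_pos {x : Fin N → ℝ} (hx : x ≠ 0) : 0 < x ⬝ᵥ x := by
  rcases Function.ne_iff.mp hx with ⟨i, hi⟩
  have : 0 < x i * x i := mul_self_pos.mpr hi
  exact Finset.sum_pos' (fun j _ => mul_self_nonneg _) ⟨i, Finset.mem_univ i, this⟩

noncomputable def en (x : Fin N → ℝ) : ℝ := Real.sqrt (x ⬝ᵥ x)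

lemma en_nonneg (x : Fin N → ℝ) : 0 ≤ en x := Real.sqrt_nonneg _

lemma en_sq (x : Fin N → ℝ) : en x ^ 2 = x ⬝ᵥ x := Real.sq_sqrt (dot_self_nonneg x)

lemma en_eq_norm (x : Fin N → ℝ) : en x = ‖(WithLp.equiv 2 (Fin N → ℝ)).symm x‖ := by
  rw [EuclideanSpace.norm_eq, en]
  congr 1
  simp [dotProduct, sq, Real.norm_eq_abs, abs_mul_abs_self]

lemma en_add_le (x y : Fin N → ℝ) : en (x + y) ≤ en x + en y := by
  simp only [en_eq_norm]
  have : (WithLp.equiv 2 (Fin N → ℝ)).symm (x + y)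
      = (WithLp.equiv 2 (Fin N → ℝ)).symm x + (WithLp.equiv 2 (Fin N → ℝ)).symm y := rfl
  rw [this]
  exact norm_add_le _ _

lemma en_smul (r : ℝ) (x : Fin N → ℝ) : en (r • x) = |r| * en x := by
  simp only [en_eq_norm]
  have : (WithLp.equiv 2 (Fin N → ℝ)).symm (r • x)
      = r • (WithLp.equiv 2 (Fin N → ℝ)).symm x := rfl
  rw [this, norm_smul, Real.norm_eq_abs]

lemma norm_le_en (x : Fin N → ℝ) : ‖x‖ ≤ en x := by
  refine pi_norm_le_iff_of_nonneg (en_nonneg x) |>.mpr fun i => ?_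
  rw [en, Real.norm_eq_abs, ← Real.sqrt_sq_eq_abs]
  refine Real.sqrt_le_sqrt ?_
  calc x i ^ 2 = x i * x i := sq (x i) ▸ (sq (x i)).symm ▸ (pow_two (x i))
  _ ≤ x ⬝ᵥ x := Finset.single_le_sum (f := fun j => x j * x j)
      (fun j _ => mul_self_nonneg _) (Finset.mem_univ i)

lemma en_le_sqrtN (x : Fin N → ℝ) : en x ≤ Real.sqrt N * ‖x‖ := by
  rw [en, ← Real.sqrt_sq (norm_nonneg x), ← Real.sqrt_mul (Nat.cast_nonneg N)]
  refine Real.sqrt_le_sqrt ?_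
  calc x ⬝ᵥ x = ∑ i, x i * x i := rfl
  _ ≤ ∑ _i : Fin N, ‖x‖ ^ 2 := by
      refine Finset.sum_le_sum fun i _ => ?_
      have h := norm_le_pi_norm x i
      have : |x i| ≤ ‖x‖ := by rwa [← Real.norm_eq_abs]
      nlinarith [abs_nonneg (x i), le_abs_self (x i * x i), abs_mul (x i) (x i)]
  _ = N * ‖x‖ ^ 2 := by simp [Finset.sum_const, nsmul_eq_mul]

def frs (B : Matrix (Fin N) (Fin N) ℝ) : ℝ := ∑ i, ∑ j, (B i j) ^ 2

lemma frs_nonneg (B : Matrix (Fin N) (Fin N) ℝ) : 0 ≤ frs B :=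
  Finset.sum_nonneg fun i _ => Finset.sum_nonneg fun j _ => sq_nonneg _

lemma col_sq_le (B : Matrix (Fin N) (Fin N) ℝ) (i : Fin N) :
    ∑ l, B l i ^ 2 ≤ frs B := by
  refine Finset.sum_le_sum fun l _ => ?_
  exact Finset.single_le_sum (f := fun m => B l m ^ 2) (fun m _ => sq_nonneg _)
    (Finset.mem_univ i)

lemma cs (B : Matrix (Fin N) (Fin N) ℝ) (x : Fin N → ℝ) :
    (B *ᵥ x) ⬝ᵥ (B *ᵥ x) ≤ frs B * (x ⬝ᵥ x) := by
  have hx : x ⬝ᵥ x = ∑ j, x j ^ 2 := by simp [dotProduct, sq]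
  calc (B *ᵥ x) ⬝ᵥ (B *ᵥ x) = ∑ i, (∑ j, B i j * x j) ^ 2 := by
        simp [dotProduct, mulVec, sq]
  _ ≤ ∑ i, (∑ j, B i j ^ 2) * (∑ j, x j ^ 2) := by
        refine Finset.sum_le_sum fun i _ => ?_
        exact Finset.sum_mul_sq_le_sq_mul_sq _ _ _
  _ = frs B * (x ⬝ᵥ x) := by rw [hx, frs, Finset.sum_mul]

lemma entry_le (B : Matrix (Fin N) (Fin N) ℝ) (i j : Fin N) :
    |(Bᵀ * B) i j| ≤ frs B := by
  have h1 : (Bᵀ * B) i j = ∑ l, B l i * B l j := by simp [Matrix.mul_apply, transpose_apply]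
  rw [h1]
  calc |∑ l, B l i * B l j| ≤ ∑ l, |B l i * B l j| := Finset.abs_sum_le_sum_abs _ _
  _ ≤ ∑ l, (B l i ^ 2 + B l j ^ 2) / 2 := by
      refine Finset.sum_le_sum fun l _ => ?_
      rw [abs_mul]
      nlinarith [sq_abs (B l i), sq_abs (B l j), sq_nonneg (|B l i| - |B l j|)]
  _ = ((∑ l, B l i ^ 2) + ∑ l, B l j ^ 2) / 2 := by
      rw [← Finset.sum_add_distrib, Finset.sum_div]
  _ ≤ (frs B + frs B) / 2 := by
      have := col_sq_le B i; have := col_sq_le B j; linarith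
  _ = frs B := by ring

lemma quad_BtB (B : Matrix (Fin N) (Fin N) ℝ) (x : Fin N → ℝ) :
    x ⬝ᵥ (Bᵀ * B) *ᵥ x = (B *ᵥ x) ⬝ᵥ (B *ᵥ x) := by
  rw [← mulVec_mulVec, dotProduct_mulVec, vecMul_transpose]


theorem exists_weight (M : Matrix (Fin N) (Fin N) ℝ) {t₁ q : ℝ}
    (hq0 : 0 < q) (hq1 : q < 1) (ht0 : 0 ≤ t₁) (htq : t₁ < q)
    (hpow : ∀ᶠ k in atTop, frs (M ^ k) ≤ t₁ ^ k) :
    ∃ (W : Matrix (Fin N) (Fin N) ℝ) (c₀ Ku : ℝ),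
      W.IsSymm ∧ W.PosDef ∧ 0 ≤ c₀ ∧ c₀ < 1 ∧ 1 ≤ Ku ∧
      (∀ x, x ⬝ᵥ x ≤ x ⬝ᵥ W *ᵥ x) ∧
      (∀ x, x ⬝ᵥ W *ᵥ x ≤ Ku * (x ⬝ᵥ x)) ∧
      (∀ x, (M *ᵥ x) ⬝ᵥ W *ᵥ (M *ᵥ x) ≤ c₀ ^ 2 * (x ⬝ᵥ W *ᵥ x)) := by
  set f : ℕ → ℝ := fun k => q⁻¹ ^ k * frs (M ^ k) with hf
  have hf0 : ∀ k, 0 ≤ f k := fun k =>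
    mul_nonneg (pow_nonneg (inv_nonneg.mpr hq0.le) _) (frs_nonneg _)
  have hratio : 0 ≤ t₁ / q ∧ t₁ / q < 1 :=
    ⟨div_nonneg ht0 hq0.le, (div_lt_one hq0).mpr htq⟩
  have hsf : Summable f := by
    obtain ⟨k₀, hk₀⟩ := eventually_atTop.mp hpow
    rw [← summable_nat_add_iff k₀]
    refine Summable.of_nonneg_of_le (fun k => hf0 _) (fun k => ?_)
      (summable_geometric_of_lt_one hratio.1 hratio.2)
    have h1 : f (k + k₀) ≤ (t₁ / q) ^ (k + k₀) := by
      rw [hf, div_pow, div_eq_mul_inv, mul_comm]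
      have := hk₀ (k + k₀) (Nat.le_add_left _ _)
      have hp : (0:ℝ) ≤ q⁻¹ ^ (k + k₀) := pow_nonneg (inv_nonneg.mpr hq0.le) _
      calc q⁻¹ ^ (k + k₀) * frs (M ^ (k + k₀)) ≤ q⁻¹ ^ (k + k₀) * t₁ ^ (k + k₀) :=
            mul_le_mul_of_nonneg_left this hp
      _ = (q ^ (k + k₀))⁻¹ * t₁ ^ (k + k₀) := by rw [inv_pow]
    exact h1.trans (pow_le_pow_of_le_one hratio.1 hratio.2.le (Nat.le_add_right _ _))
  set K : ℝ := ∑' k, f k with hK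
  have hK0 : 0 ≤ K := tsum_nonneg hf0
  set Ku : ℝ := K + 1 with hKu
  have hKu1 : (1:ℝ) ≤ Ku := by linarith
  have hKu0 : (0:ℝ) < Ku := by linarith
  -- the scalar series
  set s : (Fin N → ℝ) → ℕ → ℝ :=
    fun x k => q⁻¹ ^ k * ((M ^ k *ᵥ x) ⬝ᵥ (M ^ k *ᵥ x)) with hs
  have hs0 : ∀ x k, 0 ≤ s x k := fun x k =>
    mul_nonneg (pow_nonneg (inv_nonneg.mpr hq0.le) _) (dot_self_nonneg _)
  have hsle : ∀ x k, s x k ≤ f k * (x ⬝ᵥ x) := by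
    intro x k
    rw [hs, hf]
    calc q⁻¹ ^ k * ((M ^ k *ᵥ x) ⬝ᵥ (M ^ k *ᵥ x))
        ≤ q⁻¹ ^ k * (frs (M ^ k) * (x ⬝ᵥ x)) :=
          mul_le_mul_of_nonneg_left (cs _ _) (pow_nonneg (inv_nonneg.mpr hq0.le) _)
    _ = q⁻¹ ^ k * frs (M ^ k) * (x ⬝ᵥ x) := by ring
  have hss : ∀ x, Summable (s x) := fun x =>
    Summable.of_nonneg_of_le (hs0 x) (hsle x) (hsf.mul_right _)
  -- the entrywise series
  set g : ℕ → Matrix (Fin N) (Fin N) ℝ :=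
    fun k => q⁻¹ ^ k • ((M ^ k)ᵀ * (M ^ k)) with hg
  have hge : ∀ i j, Summable fun k => g k i j := by
    intro i j
    refine Summable.of_norm_bounded hsf fun k => ?_
    rw [hg]
    simp only [Matrix.smul_apply, smul_eq_mul, Real.norm_eq_abs, abs_mul, abs_pow, abs_inv,
      abs_of_pos hq0]
    exact mul_le_mul_of_nonneg_left (entry_le _ i j)
      (pow_nonneg (inv_nonneg.mpr hq0.le) _)
  set W : Matrix (Fin N) (Fin N) ℝ := Matrix.of fun i j => ∑' k, g k i j with hW
  -- quadratic form identity
  have hgq : ∀ x k, x ⬝ᵥ g k *ᵥ x = s x k := by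
    intro x k
    rw [hg, hs, smul_mulVec, dotProduct_smul, smul_eq_mul, quad_BtB]
  have quad : ∀ x, x ⬝ᵥ W *ᵥ x = ∑' k, s x k := by
    intro x
    have h1 : ∀ i, (W *ᵥ x) i = ∑' k, (g k *ᵥ x) i := by
      intro i
      show (fun j => W i j) ⬝ᵥ x = _
      calc ∑ j, W i j * x j = ∑ j, ∑' k, g k i j * x j := by
            refine Finset.sum_congr rfl fun j _ => ?_
            rw [show W i j = ∑' k, g k i j from rfl, tsum_mul_right]
      _ = ∑' k, ∑ j, g k i j * x j :=
            (Summable.tsum_finsetSum fun j _ => (hge i j).mul_right _).symm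
      _ = ∑' k, (g k *ᵥ x) i := rfl
    have hsumrow : ∀ i, Summable fun k => (g k *ᵥ x) i := by
      intro i
      show Summable fun k => ∑ j, g k i j * x j
      exact summable_sum fun j _ => (hge i j).mul_right _
    calc x ⬝ᵥ W *ᵥ x = ∑ i, x i * (W *ᵥ x) i := rfl
    _ = ∑ i, ∑' k, x i * (g k *ᵥ x) i := by
          refine Finset.sum_congr rfl fun i _ => ?_
          rw [h1 i, tsum_mul_left]
    _ = ∑' k, ∑ i, x i * (g k *ᵥ x) i :=
          (Summable.tsum_finsetSum fun i _ => (hsumrow i).mul_left _).symm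
    _ = ∑' k, x ⬝ᵥ g k *ᵥ x := rfl
    _ = ∑' k, s x k := by exact tsum_congr fun k => hgq x k
  -- lower bound
  have lower : ∀ x, x ⬝ᵥ x ≤ x ⬝ᵥ W *ᵥ x := by
    intro x
    rw [quad x]
    have h0 : s x 0 = x ⬝ᵥ x := by simp [hs]
    calc x ⬝ᵥ x = s x 0 := h0.symm
    _ ≤ ∑' k, s x k := Summable.le_tsum (hss x) 0 fun k _ => hs0 x k
  -- upper bound
  have upper : ∀ x, x ⬝ᵥ W *ᵥ x ≤ Ku * (x ⬝ᵥ x) := by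
    intro x
    rw [quad x]
    calc ∑' k, s x k ≤ ∑' k, f k * (x ⬝ᵥ x) :=
          Summable.tsum_le_tsum (hsle x) (hss x) (hsf.mul_right _)
    _ = K * (x ⬝ᵥ x) := by rw [tsum_mul_right]
    _ ≤ Ku * (x ⬝ᵥ x) := by
          have := dot_self_nonneg x; nlinarith
  -- symmetry
  have hsymm : W.IsSymm := by
    rw [Matrix.IsSymm]
    ext i j
    show W j i = W i j
    refine tsum_congr fun k => ?_
    rw [hg]
    simp only [Matrix.smul_apply, smul_eq_mul]
    congr 1
    rw [Matrix.mul_apply, Matrix.mul_apply]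
    exact Finset.sum_congr rfl fun l _ => by
      simp [transpose_apply, mul_comm]
  -- posdef
  have hpos : W.PosDef := by
    refine Matrix.PosDef.of_dotProduct_mulVec_pos ?_ ?_
    · rw [Matrix.IsHermitian, conjTranspose_eq_transpose_of_trivial]
      exact hsymm
    · intro x hx
      have : x ⬝ᵥ x ≤ x ⬝ᵥ W *ᵥ x := lower x
      have hp := dot_self_pos hx
      simpa [star_trivial] using lt_of_lt_of_le hp this
  -- contraction constant
  set c₀ : ℝ := Real.sqrt (q * (1 - 1 / Ku)) with hc₀
  have hc₀arg : 0 ≤ q * (1 - 1 / Ku) := by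
    have h1 : 1 / Ku ≤ 1 := by
      rw [div_le_one hKu0]; exact hKu1
    nlinarith
  have hc₀sq : c₀ ^ 2 = q * (1 - 1 / Ku) := Real.sq_sqrt hc₀arg
  have hc₀0 : 0 ≤ c₀ := Real.sqrt_nonneg _
  have hc₀1 : c₀ < 1 := by
    have harg1 : q * (1 - 1 / Ku) < 1 := by
      have h2 : 0 < 1 / Ku := by positivity
      nlinarith
    have := Real.sqrt_lt_sqrt hc₀arg harg1
    rw [hc₀]
    rwa [Real.sqrt_one] at this
  -- Lyapunov inequality
  have lyap : ∀ x, (M *ᵥ x) ⬝ᵥ W *ᵥ (M *ᵥ x) ≤ c₀ ^ 2 * (x ⬝ᵥ W *ᵥ x) := by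
    intro x
    have hshift : ∀ k, s (M *ᵥ x) k = q * s x (k + 1) := by
      intro k
      rw [hs]
      simp only [mulVec_mulVec, ← pow_succ]
      rw [show q * (q⁻¹ ^ (k+1) * ((M ^ (k+1) *ᵥ x) ⬝ᵥ (M ^ (k+1) *ᵥ x)))
          = (q * q⁻¹ ^ (k+1)) * ((M ^ (k+1) *ᵥ x) ⬝ᵥ (M ^ (k+1) *ᵥ x)) from by ring]
      congr 1
      rw [pow_succ, ← mul_assoc]
      field_simp
    have hsx := hss x
    have hQsplit : ∑' k, s x k = s x 0 + ∑' k, s x (k + 1) := Summable.tsum_eq_zero_add hsx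
    have hs0x : s x 0 = x ⬝ᵥ x := by simp [hs]
    have hLHS : (M *ᵥ x) ⬝ᵥ W *ᵥ (M *ᵥ x) = q * ((x ⬝ᵥ W *ᵥ x) - (x ⬝ᵥ x)) := by
      rw [quad (M *ᵥ x)]
      calc ∑' k, s (M *ᵥ x) k = ∑' k, q * s x (k + 1) := tsum_congr hshift
      _ = q * ∑' k, s x (k + 1) := tsum_mul_left
      _ = q * ((x ⬝ᵥ W *ᵥ x) - (x ⬝ᵥ x)) := by
            rw [quad x]; rw [hQsplit, hs0x]; ring
    rw [hLHS, hc₀sq]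
    have hub : (x ⬝ᵥ W *ᵥ x) / Ku ≤ x ⬝ᵥ x := by
      rw [div_le_iff₀ hKu0]
      calc x ⬝ᵥ W *ᵥ x ≤ Ku * (x ⬝ᵥ x) := upper x
      _ = (x ⬝ᵥ x) * Ku := by ring
    have h3 : q * ((x ⬝ᵥ W *ᵥ x) - (x ⬝ᵥ x)) ≤ q * ((x ⬝ᵥ W *ᵥ x) - (x ⬝ᵥ W *ᵥ x) / Ku) := by
      have := hub
      nlinarith
    calc q * ((x ⬝ᵥ W *ᵥ x) - (x ⬝ᵥ x)) ≤ q * ((x ⬝ᵥ W *ᵥ x) - (x ⬝ᵥ W *ᵥ x) / Ku) := h3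
    _ = q * (1 - 1 / Ku) * (x ⬝ᵥ W *ᵥ x) := by ring
  exact ⟨W, c₀, Ku, hsymm, hpos, hc₀0, hc₀1, hKu1, lower, upper, lyap⟩

attribute [local instance] Matrix.frobeniusNormedAddCommGroup Matrix.frobeniusNormedRing
  Matrix.frobeniusNormedAlgebra

lemma frs_eq_norm_sq (B : Matrix (Fin N) (Fin N) ℝ) :
    frs B = ‖B.map (fun x : ℝ => (x : ℂ))‖ ^ 2 := by
  have hS : (∑ i, ∑ j, ‖(B.map (fun x : ℝ => (x : ℂ))) i j‖ ^ 2) = frs B := by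
    rw [frs]
    exact Finset.sum_congr rfl fun i _ => Finset.sum_congr rfl fun j _ => by
      simp [Matrix.map_apply, Complex.norm_real, Real.norm_eq_abs, sq_abs]
  have h2 : ‖B.map (fun x : ℝ => (x : ℂ))‖ ^ 2
      = ∑ i, ∑ j, ‖(B.map (fun x : ℝ => (x : ℂ))) i j‖ ^ 2 := by
    rw [Matrix.frobenius_norm_def, ← Real.rpow_natCast _ 2, ← Real.rpow_mul
      (by positivity)]
    norm_num
  rw [h2, hS]

lemma map_pow_comm (B : Matrix (Fin N) (Fin N) ℝ) (k : ℕ) :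
    (B ^ k).map (fun x : ℝ => (x : ℂ)) = (B.map (fun x : ℝ => (x : ℂ))) ^ k := by
  have : (fun x : ℝ => (x : ℂ)) = ⇑(algebraMap ℝ ℂ) := rfl
  rw [this]
  have h := map_pow ((algebraMap ℝ ℂ).mapMatrix) B k
  simpa [RingHom.mapMatrix_apply] using h

theorem power_decay (M : Matrix (Fin N) (Fin N) ℝ) {t : ℝ} (ht0 : 0 ≤ t) (ht1 : t < 1)
    (hspec : ∀ μ ∈ spectrum ℂ (M.map (fun x : ℝ => (x : ℂ))), ‖μ‖ ^ 2 ≤ t) :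
    ∀ᶠ k in atTop, frs (M ^ k) ≤ ((2 * t + 1) / 3) ^ k := by
  set t₁ : ℝ := (2 * t + 1) / 3 with ht₁
  have ht₁0 : 0 < t₁ := by rw [ht₁]; linarith
  have htt₁ : t < t₁ := by rw [ht₁]; linarith
  set Mc := M.map (fun x : ℝ => (x : ℂ)) with hMc
  haveI : CompleteSpace (Matrix (Fin N) (Fin N) ℂ) := FiniteDimensional.complete ℂ _
  -- spectral radius bound
  have hρ : spectralRadius ℂ Mc ≤ ENNReal.ofReal (Real.sqrt t) := by
    rw [spectralRadius]
    refine iSup₂_le fun μ hμ => ?_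
    have h1 : ‖μ‖ ≤ Real.sqrt t := by
      have := hspec μ hμ
      nlinarith [Real.sq_sqrt ht0, Real.sqrt_nonneg t, norm_nonneg μ,
        abs_le_of_sq_le_sq' (by nlinarith [Real.sq_sqrt ht0] : ‖μ‖^2 ≤ Real.sqrt t^2)
          (Real.sqrt_nonneg t)]
    calc (‖μ‖₊ : ENNReal) = ENNReal.ofReal ‖μ‖ := (by rw [ofReal_norm]; rfl)
    _ ≤ ENNReal.ofReal (Real.sqrt t) := ENNReal.ofReal_le_ofReal h1
  have hlt : spectralRadius ℂ Mc < ENNReal.ofReal (Real.sqrt t₁) := by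
    refine lt_of_le_of_lt hρ ?_
    rw [ENNReal.ofReal_lt_ofReal_iff (Real.sqrt_pos.mpr ht₁0)]
    exact Real.sqrt_lt_sqrt ht0 htt₁
  have hgelf := spectrum.pow_nnnorm_pow_one_div_tendsto_nhds_spectralRadius Mc
  have hev : ∀ᶠ n : ℕ in atTop,
      (‖Mc ^ n‖₊ : ENNReal) ^ (1 / (n:ℝ)) < ENNReal.ofReal (Real.sqrt t₁) :=
    hgelf.eventually_lt_const hlt
  -- convert
  rw [eventually_atTop] at hev ⊢
  obtain ⟨k₀, hk₀⟩ := hev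
  refine ⟨max k₀ 1, fun k hk => ?_⟩
  have hk1 : 1 ≤ k := le_trans (le_max_right _ _) hk
  have hkk₀ : k₀ ≤ k := le_trans (le_max_left _ _) hk
  have h2 := hk₀ k hkk₀
  have hkpos : (0:ℝ) < k := by exact_mod_cast hk1
  -- raise to power k
  have h3 : (‖Mc ^ k‖₊ : ENNReal) < (ENNReal.ofReal (Real.sqrt t₁)) ^ (k:ℝ) := by
    have := ENNReal.rpow_lt_rpow h2 hkpos
    rwa [← ENNReal.rpow_mul, one_div, inv_mul_cancel₀ (ne_of_gt hkpos),
      ENNReal.rpow_one] at this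

  have h4 : ‖Mc ^ k‖ ≤ Real.sqrt t₁ ^ (k:ℕ) := by
    have hrw : (ENNReal.ofReal (Real.sqrt t₁)) ^ (k:ℝ) = ENNReal.ofReal (Real.sqrt t₁ ^ (k:ℕ)) := by
      rw [ENNReal.ofReal_rpow_of_nonneg (Real.sqrt_nonneg _) hkpos.le,
        Real.rpow_natCast]
    rw [hrw] at h3
    have h5 := le_of_lt h3
    rw [← ENNReal.ofReal_le_ofReal_iff (by positivity), ofReal_norm]
    exact h5
  have h6 : frs (M ^ k) = ‖Mc ^ k‖ ^ 2 := by
    rw [hMc, ← map_pow_comm, frs_eq_norm_sq]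
  rw [h6]
  calc ‖Mc ^ k‖ ^ 2 ≤ (Real.sqrt t₁ ^ k) ^ 2 := by
        have := norm_nonneg (Mc ^ k); nlinarith
  _ = t₁ ^ k := by
        rw [← pow_mul, mul_comm k 2, pow_mul, Real.sq_sqrt ht₁0.le]


theorem spectral_smallness (A : Matrix (Fin N) (Fin N) ℝ)
    (hspec : ∀ μ ∈ spectrum ℂ (A.map (fun x : ℝ => (x : ℂ))), μ.re < 1) :
    ∃ a : ℝ, 0 < a ∧ a ≤ 1 ∧ ∃ t : ℝ, 0 ≤ t ∧ t < 1 ∧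
      ∀ μ' ∈ spectrum ℂ (((1 - a) • (1 : Matrix (Fin N) (Fin N) ℝ) + a • A).map
        (fun x : ℝ => (x : ℂ))), ‖μ'‖ ^ 2 ≤ t := by
  set Ac := A.map (fun x : ℝ => (x : ℂ)) with hAc
  set S := spectrum ℂ Ac with hS
  have hScomp : IsCompact S := spectrum.isCompact Ac
  have hKb : ∀ μ ∈ S, ‖μ‖ ≤ ‖Ac‖ * ‖(1 : Matrix (Fin N) (Fin N) ℂ)‖ := fun μ hμ =>
    spectrum.norm_le_norm_mul_of_mem hμ
  set Kb : ℝ := ‖Ac‖ * ‖(1 : Matrix (Fin N) (Fin N) ℂ)‖ with hKbdef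
  have hKb0 : 0 ≤ Kb := mul_nonneg (norm_nonneg _) (norm_nonneg _)
  -- uniform gap δ
  obtain ⟨δ, hδ0, hδ1, hδ⟩ : ∃ δ : ℝ, 0 < δ ∧ δ ≤ 1 ∧ ∀ μ ∈ S, δ ≤ 1 - μ.re := by
    rcases Set.eq_empty_or_nonempty S with hSe | hSne
    · exact ⟨1, one_pos, le_refl 1, fun μ hμ => absurd hμ (by rw [hSe]; exact Set.notMem_empty μ)⟩
    · have hcont : ContinuousOn (fun μ : ℂ => 1 - μ.re) S :=
        (continuous_const.sub (Complex.continuous_re)).continuousOn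
      obtain ⟨μ₀, hμ₀S, hmin⟩ := hScomp.exists_isMinOn hSne hcont
      refine ⟨min (1 - μ₀.re) 1, ?_, min_le_right _ _, fun μ hμ => ?_⟩
      · exact lt_min (by linarith [hspec μ₀ hμ₀S]) one_pos
      · exact le_trans (min_le_left _ _) (hmin hμ)
  set a : ℝ := min 1 (δ / (1 + Kb) ^ 2) with ha
  have ha0 : 0 < a := lt_min one_pos (by positivity)
  have ha1 : a ≤ 1 := min_le_left _ _
  have haKb : a * (1 + Kb) ^ 2 ≤ δ := by
    have h1 : a ≤ δ / (1 + Kb) ^ 2 := min_le_right _ _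
    have h2 : (0:ℝ) < (1 + Kb) ^ 2 := by positivity
    calc a * (1 + Kb) ^ 2 ≤ (δ / (1 + Kb) ^ 2) * (1 + Kb) ^ 2 :=
          mul_le_mul_of_nonneg_right h1 h2.le
    _ = δ := by field_simp
  refine ⟨a, ha0, ha1, 1 - a * δ, ?_, ?_, ?_⟩
  · nlinarith
  · nlinarith
  -- the spectrum of the damped matrix
  intro μ' hμ'
  set Mc := (((1 - a) • (1 : Matrix (Fin N) (Fin N) ℝ) + a • A).map (fun x : ℝ => (x : ℂ)))
    with hMcdef
  have hMc : Mc = algebraMap ℂ (Matrix (Fin N) (Fin N) ℂ) ((1 - a : ℝ) : ℂ)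
      + ((a : ℝ) : ℂ) • Ac := by
    ext i j
    simp only [hMcdef, Matrix.map_apply, Matrix.add_apply, Matrix.smul_apply,
      Matrix.algebraMap_matrix_apply, hAc, smul_eq_mul]
    by_cases h : i = j <;>
      simp [h, Matrix.one_apply, Complex.ofReal_add, Complex.ofReal_mul]
  have hsum : μ' ∈ (({((1 - a : ℝ) : ℂ)} : Set ℂ) + spectrum ℂ (((a : ℝ) : ℂ) • Ac)) := by
    rw [spectrum.singleton_add_eq, ← hMc]; exact hμ'
  obtain ⟨c1, hc1, ν, hν, hc⟩ := Set.mem_add.mp hsum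
  rw [Set.mem_singleton_iff] at hc1
  subst hc1
  -- remove the scalar
  have haC : ((a : ℝ) : ℂ) ≠ 0 := by exact_mod_cast ha0.ne'
  have hsmul : spectrum ℂ (((a : ℝ) : ℂ) • Ac) = (Units.mk0 _ haC) • spectrum ℂ Ac := by
    rw [← spectrum.unit_smul_eq_smul]
    congr 1
  rw [hsmul] at hν
  obtain ⟨μ, hμ, hμν⟩ := hν
  have hν_eq : ν = ((a : ℝ) : ℂ) * μ := by
    rw [← hμν]; rfl
  subst hc
  -- now the numeric estimate
  have hre : δ ≤ 1 - μ.re := hδ μ hμ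
  have hnorm : ‖μ‖ ≤ Kb := hKb μ hμ
  have hre_abs : |μ.re| ≤ ‖μ‖ := Complex.abs_re_le_norm μ
  have hnormsq : μ.re ^ 2 + μ.im ^ 2 ≤ Kb ^ 2 := by
    have h1 : Complex.normSq μ = μ.re ^ 2 + μ.im ^ 2 := by
      rw [Complex.normSq_apply]; ring
    have h2 : ‖μ‖ ^ 2 = Complex.normSq μ := Complex.sq_norm μ
    nlinarith [norm_nonneg μ]
  have hz : ‖((1 - a : ℝ) : ℂ) + ν‖ ^ 2
      = (1 - a + a * μ.re) ^ 2 + (a * μ.im) ^ 2 := by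
    rw [hν_eq]
    rw [show ((1 - a : ℝ) : ℂ) + ((a : ℝ) : ℂ) * μ
        = Complex.mk (1 - a + a * μ.re) (a * μ.im) from by
      apply Complex.ext <;> simp [Complex.add_re, Complex.add_im, Complex.mul_re,
        Complex.mul_im]]
    rw [Complex.sq_norm, Complex.normSq_apply]
    ring
  rw [hz]
  -- (1-a+a·Re μ)² + (a·Im μ)² = 1 − 2a(1−Re μ) + a²((1−Re μ)² + Im μ²) ≤ 1 − aδ
  have hgeom : (1 - μ.re) ^ 2 + μ.im ^ 2 ≤ (1 + Kb) ^ 2 := by nlinarith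
  have key : a ^ 2 * ((1 - μ.re) ^ 2 + μ.im ^ 2) ≤ a * δ := by
    calc a ^ 2 * ((1 - μ.re) ^ 2 + μ.im ^ 2) ≤ a ^ 2 * (1 + Kb) ^ 2 := by nlinarith
    _ = a * (a * (1 + Kb) ^ 2) := by ring
    _ ≤ a * δ := mul_le_mul_of_nonneg_left haKb ha0.le
  have h2a : 2 * a * δ ≤ 2 * a * (1 - μ.re) := by nlinarith
  nlinarith [key, h2a]


end DampedAux

/-- If `F` is `C¹` near a fixed point `n*` and all complex eigenvalues of the Jacobian
`DF(n*)` have real part `< 1`, then there are `a ∈ (0,1]`, a symmetric positive-definite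
`W`, `c ∈ (0,1)` and `γ > 0` such that the damped map `F̃(n) = (1−a) n + a F(n)` is a
`c`-contraction in the `W`-weighted norm on the `γ`-ball around `n*`. -/
theorem damped_map_contraction_of_jacobian {N : ℕ} (F : (Fin N → ℝ) → (Fin N → ℝ))
    (nstar : Fin N → ℝ) (hfix : F nstar = nstar)
    (U : Set (Fin N → ℝ)) (hU : IsOpen U) (hnU : nstar ∈ U)
    (hF : ContDiffOn ℝ 1 F U)
    (hspec : ∀ μ ∈ spectrum ℂ
      ((LinearMap.toMatrix' ((fderiv ℝ F nstar) : (Fin N → ℝ) →ₗ[ℝ] (Fin N → ℝ))).map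
        (fun x : ℝ => (x : ℂ))), μ.re < 1) :
    ∃ (a : ℝ) (W : Matrix (Fin N) (Fin N) ℝ) (c γ : ℝ),
      0 < a ∧ a ≤ 1 ∧ W.IsSymm ∧ W.PosDef ∧ 0 < c ∧ c < 1 ∧ 0 < γ ∧
      ∀ n₁ n₂ : Fin N → ℝ,
        Real.sqrt ((n₁ - nstar) ⬝ᵥ W.mulVec (n₁ - nstar)) ≤ γ →
        Real.sqrt ((n₂ - nstar) ⬝ᵥ W.mulVec (n₂ - nstar)) ≤ γ →
        Real.sqrt ((((1 - a) • n₁ + a • F n₁) - ((1 - a) • n₂ + a • F n₂)) ⬝ᵥ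
            W.mulVec (((1 - a) • n₁ + a • F n₁) - ((1 - a) • n₂ + a • F n₂))) ≤
          c * Real.sqrt ((n₁ - n₂) ⬝ᵥ W.mulVec (n₁ - n₂)) := by
  classical
  open DampedAux in
  set J : (Fin N → ℝ) →L[ℝ] (Fin N → ℝ) := fderiv ℝ F nstar with hJ
  set A : Matrix (Fin N) (Fin N) ℝ :=
    LinearMap.toMatrix' (J : (Fin N → ℝ) →ₗ[ℝ] (Fin N → ℝ)) with hA
  obtain ⟨a, ha0, ha1, t, ht0, ht1, hspec'⟩ := DampedAux.spectral_smallness A hspec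
  set M : Matrix (Fin N) (Fin N) ℝ := (1 - a) • 1 + a • A with hM
  have hpow := DampedAux.power_decay M ht0 ht1 hspec'
  set t₁ : ℝ := (2 * t + 1) / 3 with ht₁def
  set q : ℝ := (t + 2) / 3 with hqdef
  have hq0 : 0 < q := by rw [hqdef]; linarith
  have hq1 : q < 1 := by rw [hqdef]; linarith
  have ht₁0 : 0 ≤ t₁ := by rw [ht₁def]; linarith
  have ht₁q : t₁ < q := by rw [ht₁def, hqdef]; linarith
  obtain ⟨W, c₀, Ku, hsymm, hposdef, hc₀0, hc₀1, hKu1, lower, upper, lyap⟩ :=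
    DampedAux.exists_weight M hq0 hq1 ht₁0 ht₁q hpow
  have hKu0 : (0:ℝ) < Ku := lt_of_lt_of_le one_pos hKu1
  -- weighted norm
  set p : (Fin N → ℝ) → ℝ := fun v => Real.sqrt (v ⬝ᵥ W *ᵥ v) with hp
  have hp0 : ∀ v, 0 ≤ p v := fun v => Real.sqrt_nonneg _
  have plower : ∀ v, DampedAux.en v ≤ p v := fun v =>
    Real.sqrt_le_sqrt (lower v)
  have pupper : ∀ v, p v ≤ Real.sqrt Ku * DampedAux.en v := by
    intro v
    rw [hp]
    calc Real.sqrt (v ⬝ᵥ W *ᵥ v) ≤ Real.sqrt (Ku * (v ⬝ᵥ v)) :=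
          Real.sqrt_le_sqrt (upper v)
    _ = Real.sqrt Ku * DampedAux.en v := Real.sqrt_mul hKu0.le _
  have pM : ∀ v, p (M *ᵥ v) ≤ c₀ * p v := by
    intro v
    rw [hp]
    calc Real.sqrt ((M *ᵥ v) ⬝ᵥ W *ᵥ (M *ᵥ v)) ≤ Real.sqrt (c₀ ^ 2 * (v ⬝ᵥ W *ᵥ v)) :=
          Real.sqrt_le_sqrt (lyap v)
    _ = c₀ * p v := by
          rw [Real.sqrt_mul (sq_nonneg _), Real.sqrt_sq hc₀0]
  -- triangle inequality for p via the psd square root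
  have ptri : ∀ u v, p (u + v) ≤ p u + p v := by
    have hps : W.PosSemidef := hposdef.posSemidef
    open scoped MatrixOrder in
    set Sq := CFC.sqrt W with hSq
    have hSqT : Sqᵀ = Sq := by
      open scoped MatrixOrder in
      have h1 := (CFC.sqrt_nonneg W).posSemidef.1
      rwa [Matrix.IsHermitian, conjTranspose_eq_transpose_of_trivial] at h1
    have hW2 : Sqᵀ * Sq = W := by open scoped MatrixOrder in rw [hSqT, CFC.sqrt_mul_sqrt_self W hps.nonneg]
    have hpen : ∀ v, p v = DampedAux.en (Sq *ᵥ v) := by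
      intro v
      rw [hp, DampedAux.en, ← DampedAux.quad_BtB Sq v, hW2]
    intro u v
    rw [hpen, hpen, hpen, Matrix.mulVec_add]
    exact DampedAux.en_add_le _ _
  -- constants
  set c : ℝ := (1 + c₀) / 2 with hc
  have hcpos : 0 < c := by rw [hc]; linarith
  have hc1 : c < 1 := by rw [hc]; linarith
  set ε : ℝ := (1 - c₀) / (2 * (Real.sqrt Ku * Real.sqrt N + 1)) with hε
  have hden : (0:ℝ) < Real.sqrt Ku * Real.sqrt N + 1 := by positivity
  have hε0 : 0 < ε := by
    rw [hε]; exact div_pos (by linarith) (by positivity)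
  have hεbound : Real.sqrt Ku * Real.sqrt N * ε ≤ (1 - c₀) / 2 := by
    have hεD : ε * (Real.sqrt Ku * Real.sqrt N + 1) = (1 - c₀) / 2 := by
      rw [hε]; field_simp
    calc Real.sqrt Ku * Real.sqrt N * ε ≤ (Real.sqrt Ku * Real.sqrt N + 1) * ε := by
          nlinarith [hε0.le]
    _ = (1 - c₀) / 2 := by rw [mul_comm]; exact hεD
  -- neighborhood where the derivative is close
  have hdiff : DifferentiableOn ℝ F U := hF.differentiableOn one_ne_zero
  have hcont : ContinuousOn (fderiv ℝ F) U :=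
    hF.continuousOn_fderiv_of_isOpen hU le_rfl
  have hct : ContinuousAt (fderiv ℝ F) nstar := hcont.continuousAt (hU.mem_nhds hnU)
  have hev : ∀ᶠ z in nhds nstar, ‖fderiv ℝ F z - J‖ < ε ∧ z ∈ U := by
    refine Filter.Eventually.and ?_ (hU.mem_nhds hnU)
    have h2 : Filter.Tendsto (fderiv ℝ F) (nhds nstar) (nhds J) := hct
    have h3 : ∀ᶠ z in nhds nstar, fderiv ℝ F z ∈ Metric.ball J ε :=
      h2.eventually_mem (Metric.ball_mem_nhds J hε0)
    refine h3.mono fun z hz => ?_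
    rwa [Metric.mem_ball, dist_eq_norm] at hz
  obtain ⟨β, hβ0, hβ⟩ := Metric.eventually_nhds_iff.mp hev
  set γ : ℝ := β / 2 with hγ
  have hγ0 : 0 < γ := by rw [hγ]; linarith
  refine ⟨a, W, c, γ, ha0, ha1, hsymm, hposdef, hcpos, hc1, hγ0, ?_⟩
  intro n₁ n₂ h1 h2
  -- membership in the ball
  have hmem : ∀ n : Fin N → ℝ, Real.sqrt ((n - nstar) ⬝ᵥ W *ᵥ (n - nstar)) ≤ γ →
      n ∈ Metric.ball nstar β := by
    intro n hn
    rw [Metric.mem_ball, dist_eq_norm]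
    have h3 : ‖n - nstar‖ ≤ p (n - nstar) :=
      le_trans (DampedAux.norm_le_en _) (plower _)
    have : p (n - nstar) ≤ γ := hn
    calc ‖n - nstar‖ ≤ γ := le_trans h3 this
    _ < β := by rw [hγ]; linarith
  have hn₁ := hmem n₁ h1
  have hn₂ := hmem n₂ h2
  -- the linear part as a continuous linear map
  set T : (Fin N → ℝ) →L[ℝ] (Fin N → ℝ) :=
    LinearMap.toContinuousLinearMap (Matrix.toLin' M) with hT
  have hTapp : ∀ v, T v = M *ᵥ v := fun v => Matrix.toLin'_apply M v
  -- the nonlinear remainder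
  set Hm : (Fin N → ℝ) → (Fin N → ℝ) :=
    fun z => ((1 - a) • z + a • F z) - M *ᵥ z with hHm
  -- derivative of Hm on the ball
  have hderiv : ∀ z ∈ Metric.ball nstar β,
      HasFDerivWithinAt Hm (a • (fderiv ℝ F z - J)) (Metric.ball nstar β) z := by
    intro z hz
    have hzU : z ∈ U := (hβ (by rwa [Metric.mem_ball] at hz)).2
    have hFz : HasFDerivAt F (fderiv ℝ F z) z :=
      (hdiff.differentiableAt (hU.mem_nhds hzU)).hasFDerivAt
    have hlin : HasFDerivAt (fun z : Fin N → ℝ => (1 - a) • z)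
        ((1 - a) • ContinuousLinearMap.id ℝ (Fin N → ℝ)) z :=
      (hasFDerivAt_id z).const_smul (1 - a)
    have hsm : HasFDerivAt (fun z => a • F z) (a • fderiv ℝ F z) z := hFz.const_smul a
    have hTd : HasFDerivAt (fun z => M *ᵥ z) T z := by
      have h := T.hasFDerivAt (x := z)
      have hfun : (fun z : Fin N → ℝ => M *ᵥ z) = fun z => T z := by
        funext w; rw [hTapp]
      rw [hfun]
      exact h
    have hcomb := (hlin.add hsm).sub hTd
    have heq : ((1 - a) • ContinuousLinearMap.id ℝ (Fin N → ℝ) + a • fderiv ℝ F z) - T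
        = a • (fderiv ℝ F z - J) := by
      ext v
      simp only [ContinuousLinearMap.sub_apply, ContinuousLinearMap.add_apply,
        ContinuousLinearMap.smul_apply, ContinuousLinearMap.id_apply]
      have hTv : T v = (1 - a) • v + a • (J v) := by
        rw [hTapp, hM, Matrix.add_mulVec, Matrix.smul_mulVec,
          Matrix.smul_mulVec, Matrix.one_mulVec, hA]
        congr 1
        congr 1
        rw [← Matrix.toLin'_apply (LinearMap.toMatrix' (J : (Fin N → ℝ) →ₗ[ℝ] (Fin N → ℝ))) v,
          Matrix.toLin'_toMatrix']
        rfl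
      rw [hTv]
      simp only [Pi.smul_apply, Pi.add_apply, Pi.sub_apply, smul_sub]
      ring
    rw [heq] at hcomb
    exact hcomb.hasFDerivWithinAt
  have hbound : ∀ z ∈ Metric.ball nstar β, ‖a • (fderiv ℝ F z - J)‖ ≤ ε := by
    intro z hz
    have hzb := (hβ (by rwa [Metric.mem_ball] at hz)).1
    rw [norm_smul, Real.norm_eq_abs, abs_of_pos ha0]
    calc a * ‖fderiv ℝ F z - J‖ ≤ 1 * ‖fderiv ℝ F z - J‖ :=
          mul_le_mul_of_nonneg_right ha1 (norm_nonneg _)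
    _ = ‖fderiv ℝ F z - J‖ := one_mul _
    _ ≤ ε := hzb.le
  have hMVT := Convex.norm_image_sub_le_of_norm_hasFDerivWithin_le
    hderiv hbound (convex_ball nstar β) hn₂ hn₁
  -- assemble
  set v : Fin N → ℝ := n₁ - n₂ with hv
  set G₁ : Fin N → ℝ := (1 - a) • n₁ + a • F n₁ with hG₁
  set G₂ : Fin N → ℝ := (1 - a) • n₂ + a • F n₂ with hG₂
  have hsplit : G₁ - G₂ = M *ᵥ v + (Hm n₁ - Hm n₂) := by
    rw [hHm, hv]
    simp only [Matrix.mulVec_sub]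
    rw [hG₁, hG₂]
    abel
  have hHnorm : DampedAux.en (Hm n₁ - Hm n₂) ≤ Real.sqrt N * (ε * ‖n₁ - n₂‖) := by
    calc DampedAux.en (Hm n₁ - Hm n₂) ≤ Real.sqrt N * ‖Hm n₁ - Hm n₂‖ :=
          DampedAux.en_le_sqrtN _
    _ ≤ Real.sqrt N * (ε * ‖n₁ - n₂‖) := by
          exact mul_le_mul_of_nonneg_left hMVT (Real.sqrt_nonneg _)
  have hfinal : p (G₁ - G₂) ≤ c * p v := by
    calc p (G₁ - G₂) = p (M *ᵥ v + (Hm n₁ - Hm n₂)) := by rw [hsplit]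
    _ ≤ p (M *ᵥ v) + p (Hm n₁ - Hm n₂) := ptri _ _
    _ ≤ c₀ * p v + Real.sqrt Ku * DampedAux.en (Hm n₁ - Hm n₂) :=
          add_le_add (pM v) (pupper _)
    _ ≤ c₀ * p v + Real.sqrt Ku * (Real.sqrt N * (ε * ‖n₁ - n₂‖)) := by
          refine add_le_add_right (mul_le_mul_of_nonneg_left hHnorm (Real.sqrt_nonneg _)) _
    _ ≤ c₀ * p v + Real.sqrt Ku * Real.sqrt N * ε * p v := by
          have h4 : ‖n₁ - n₂‖ ≤ p v := le_trans (DampedAux.norm_le_en _) (plower _)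
          have h5 : (0:ℝ) ≤ Real.sqrt Ku * Real.sqrt N * ε := by positivity
          have h6 : Real.sqrt Ku * (Real.sqrt N * (ε * ‖n₁ - n₂‖))
              = Real.sqrt Ku * Real.sqrt N * ε * ‖n₁ - n₂‖ := by ring
          rw [h6]
          exact add_le_add_right (mul_le_mul_of_nonneg_left h4 h5) _
    _ ≤ c₀ * p v + (1 - c₀) / 2 * p v := by
          refine add_le_add_right (mul_le_mul_of_nonneg_right hεbound (hp0 v)) _
    _ = c * p v := by rw [hc]; ring
  exact hfinal
end

section
/- Fix N ≥ 1, a weight vector w ∈ ℝ^N with strictly positive entries, n* ∈ ℝ^N, γ > 0, a ∈ (0,1], c ∈ (0,1), and a map F̄ : ℝ^N → ℝ^N such that the damped map G(n) = (1−a)·n + a·F̄(n) satisfies ‖G(n) − n*‖_w ≤ c·‖n − n*‖_w for all n ∈ B_γ(n*). Let (Ω, ℱ, (ℱ_k)_{k≥0}, P) be a filtered probability space and (n_k)_{k≥0} an adapted ℝ^N-valued process with n_0 deterministic, n_0 ∈ B_γ(n*), and n_{k+1} = (1−a)·n_k + a·F̂_k, where each F̂_k : Ω → ℝ^N is ℱ_{k+1}-measurable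 with square-integrable components and, almost surely on the event {n_t ∈ B_γ(n*) for all t ≤ k}, satisfies E[F̂_k(j) | ℱ_k] = F̄(n_k)(j) and E[F̂_k(j)² | ℱ_k] ≤ (F̄(n_k)(j))² for every j. Then for every J ≥ 1, P(n_j ∉ B_γ(n*) for some j ∈ {1,…,J}) ≤ ‖n_0 − n*‖_w² / γ². -/
open MeasureTheory

/-- Weighted squared norm `‖x‖_w² = Σ_j w(j) x(j)²`. -/
def wnormSq {N : ℕ} (w x : Fin N → ℝ) : ℝ := ∑ j, w j * (x j) ^ 2

/-- Weighted norm `‖x‖_w = sqrt(Σ_j w(j) x(j)²)`. -/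
noncomputable def wnorm {N : ℕ} (w x : Fin N → ℝ) : ℝ := Real.sqrt (wnormSq w x)

lemma memLp_mul_integrable {Ω : Type*} [MeasurableSpace Ω] {P : Measure Ω} {f g : Ω → ℝ}
    (hf : MemLp f 2 P) (hg : MemLp g 2 P) : Integrable (fun ω => f ω * g ω) P := by
  have h1 := (hf.add hg).integrable_sq
  have heq : (fun ω => f ω * g ω) = fun ω => (((f + g) ω) ^ 2 - f ω ^ 2 - g ω ^ 2) / 2 := by
    funext ω; simp [Pi.add_apply]; ring
  rw [heq]
  exact ((h1.sub hf.integrable_sq).sub hg.integrable_sq).div_const 2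

/-- Convergence of the (noisy) full coordinate fixed-point iteration: if the damped map
`G(n) = (1−a) n + a F̄(n)` is a `c`-contraction towards `n*` on `B_γ(n*)` and the iterates
`n_{k+1} = (1−a) n_k + a F̂_k` use conditionally unbiased estimates with
`E[F̂_k(j)²|ℱ_k] ≤ F̄(n_k)(j)²` on the event that all iterates so far stayed in the ball,
then the probability that some iterate `n_j`, `1 ≤ j ≤ J`, leaves the ball is at most `‖n_0 − n*‖_w²/γ²`. -/
theorem fcfp_stability {N : ℕ} (hN : 1 ≤ N) (w : Fin N → ℝ)
    (hw : ∀ j, 0 < w j) (nstar : Fin N → ℝ) (γ : ℝ) (hγ : 0 < γ)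
    (a : ℝ) (ha : 0 < a) (ha' : a ≤ 1) (c : ℝ) (hc : 0 < c) (hc' : c < 1)
    (Fbar : (Fin N → ℝ) → (Fin N → ℝ))
    (hcontr : ∀ n : Fin N → ℝ, wnorm w (n - nstar) ≤ γ →
      wnorm w (((1 - a) • n + a • Fbar n) - nstar) ≤ c * wnorm w (n - nstar))
    {Ω : Type*} {m0 : MeasurableSpace Ω} (P : Measure Ω) [IsProbabilityMeasure P]
    (ℱ : Filtration ℕ m0) (n : ℕ → Ω → Fin N → ℝ) (hadapt : Adapted ℱ n)
    (n0 : Fin N → ℝ) (hn0 : ∀ ω, n 0 ω = n0) (hball0 : wnorm w (n0 - nstar) ≤ γ)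
    (Fhat : ℕ → Ω → Fin N → ℝ)
    (hFmeas : ∀ k, StronglyMeasurable[ℱ (k + 1)] (Fhat k))
    (hFl2 : ∀ k j, MemLp (fun ω => Fhat k ω j) 2 P)
    (hupdate : ∀ k ω, n (k + 1) ω = (1 - a) • n k ω + a • Fhat k ω)
    (hunbiased : ∀ k j, ∀ᵐ ω ∂P, (∀ t ≤ k, wnorm w (n t ω - nstar) ≤ γ) →
      (P[fun ω => Fhat k ω j|ℱ k]) ω = Fbar (n k ω) j)
    (hsecond : ∀ k j, ∀ᵐ ω ∂P, (∀ t ≤ k, wnorm w (n t ω - nstar) ≤ γ) →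
      (P[fun ω => (Fhat k ω j) ^ 2|ℱ k]) ω ≤ (Fbar (n k ω) j) ^ 2) :
    ∀ J : ℕ, 1 ≤ J →
      P {ω : Ω | ∃ j : ℕ, 1 ≤ j ∧ j ≤ J ∧ γ < wnorm w (n j ω - nstar)} ≤
        ENNReal.ofReal (wnormSq w (n0 - nstar) / γ ^ 2) := by
  intro J hJ
  classical
  -- basic facts about the weighted norm
  have hSqnn : ∀ x : Fin N → ℝ, 0 ≤ wnormSq w x := fun x =>
    Finset.sum_nonneg fun j _ => mul_nonneg (hw j).le (sq_nonneg _)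
  have hnormsq : ∀ x : Fin N → ℝ, (wnorm w x) ^ 2 = wnormSq w x := fun x =>
    Real.sq_sqrt (hSqnn x)
  -- measurability and integrability of coordinates
  have hnm : ∀ k j, StronglyMeasurable[ℱ k] (fun ω => n k ω j) := fun k j =>
    ((measurable_pi_apply j).comp (hadapt k)).stronglyMeasurable
  have hnl2 : ∀ k j, MemLp (fun ω => n k ω j) 2 P := by
    intro k
    induction k with
    | zero =>
        intro j
        have : (fun ω => n 0 ω j) = fun _ => n0 j := by funext ω; rw [hn0]
        rw [this]; exact memLp_const _
    | succ k ih =>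
        intro j
        have : (fun ω => n (k+1) ω j) = fun ω => (1-a) * n k ω j + a * Fhat k ω j := by
          funext ω; rw [hupdate]; simp
        rw [this]
        exact ((ih j).const_mul _).add ((hFl2 k j).const_mul _)
  have hXmeas : ∀ k, StronglyMeasurable[ℱ k] (fun ω => wnormSq w (n k ω - nstar)) := by
    intro k
    have heq : (fun ω => wnormSq w (n k ω - nstar))
        = fun ω => ∑ j, w j * (n k ω j - nstar j) ^ 2 := by
      funext ω; simp [wnormSq, Pi.sub_apply]
    rw [heq]
    apply Finset.stronglyMeasurable_fun_sum
    intro j _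
    have h1 : StronglyMeasurable[ℱ k] (fun ω => n k ω j - nstar j) :=
      (hnm k j).sub stronglyMeasurable_const
    have h2 : StronglyMeasurable[ℱ k] (fun ω => (n k ω j - nstar j) ^ 2) := by
      simpa [pow_two, Pi.mul_def] using h1.mul h1
    exact h2.const_mul _
  have hXint : ∀ k, Integrable (fun ω => wnormSq w (n k ω - nstar)) P := by
    intro k
    have heq : (fun ω => wnormSq w (n k ω - nstar))
        = fun ω => ∑ j, w j * (n k ω j - nstar j) ^ 2 := by
      funext ω; simp [wnormSq, Pi.sub_apply]
    rw [heq]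
    apply integrable_finset_sum
    intro j _
    exact (((hnl2 k j).sub (memLp_const _)).integrable_sq).const_mul _
  -- the "stayed in the ball up to time k" events
  set A : ℕ → Set Ω := fun k => {ω | ∀ t ≤ k, wnorm w (n t ω - nstar) ≤ γ} with hAdef
  have hwnmeas : ∀ k, Measurable[ℱ k] (fun ω => wnorm w (n k ω - nstar)) := by
    intro k
    exact Real.continuous_sqrt.measurable.comp (hXmeas k).measurable
  have hAmeasF : ∀ k, MeasurableSet[ℱ k] (A k) := by
    intro k
    have heq : A k = ⋂ t, ⋂ (_ : t ≤ k), {ω | wnorm w (n t ω - nstar) ≤ γ} := by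
      ext ω; simp [hAdef]
    rw [heq]
    refine MeasurableSet.iInter fun t => MeasurableSet.iInter fun ht => ?_
    have hm : Measurable[ℱ k] (fun ω => wnorm w (n t ω - nstar)) :=
      (hwnmeas t).mono (ℱ.mono ht) le_rfl
    exact hm measurableSet_Iic
  have hAmeas : ∀ k, MeasurableSet (A k) := fun k => ℱ.le k _ (hAmeasF k)
  -- key conditional-expectation bound
  have hkey : ∀ k, ∀ᵐ ω ∂P, (∀ t ≤ k, wnorm w (n t ω - nstar) ≤ γ) →
      (P[fun ω => wnormSq w (n (k+1) ω - nstar)|ℱ k]) ω ≤ wnormSq w (n k ω - nstar) := by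
    intro k
    set b : Fin N → Ω → ℝ := fun j ω => (1 - a) * n k ω j - nstar j with hbdef
    have hbm : ∀ j, StronglyMeasurable[ℱ k] (b j) := fun j =>
      ((hnm k j).const_mul _).sub stronglyMeasurable_const
    have hbl2 : ∀ j, MemLp (b j) 2 P := fun j =>
      ((hnl2 k j).const_mul _).sub (memLp_const _)
    have hc1 : ∀ j, P[fun ω => (b j ω) ^ 2|ℱ k] = fun ω => (b j ω) ^ 2 := by
      intro j
      refine condExp_of_stronglyMeasurable (ℱ.le k) ?_ (hbl2 j).integrable_sq
      simpa [pow_two, Pi.mul_def] using (hbm j).mul (hbm j)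
    have hintbY : ∀ j, Integrable (fun ω => (2 * a * b j ω) * Fhat k ω j) P := fun j =>
      memLp_mul_integrable ((hbl2 j).const_mul (2 * a)) (hFl2 k j)
    have hc2 : ∀ j, P[fun ω => (2 * a * b j ω) * Fhat k ω j|ℱ k]
        =ᵐ[P] fun ω => (2 * a * b j ω) * (P[fun ω => Fhat k ω j|ℱ k]) ω := by
      intro j
      have := condExp_mul_of_stronglyMeasurable_left (μ := P) (m := ℱ k)
        (f := fun ω => 2 * a * b j ω) (g := fun ω => Fhat k ω j)
        ((hbm j).const_mul _) (hintbY j) ((hFl2 k j).integrable one_le_two)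
      simpa [Pi.mul_apply, Pi.mul_def] using this
    have hc3 : ∀ j, P[fun ω => a ^ 2 * (Fhat k ω j) ^ 2|ℱ k]
        =ᵐ[P] fun ω => a ^ 2 * (P[fun ω => (Fhat k ω j) ^ 2|ℱ k]) ω := by
      intro j
      simpa [Pi.smul_apply, smul_eq_mul, Pi.smul_def] using
        condExp_smul (μ := P) (m := ℱ k) (a ^ 2) (fun ω => (Fhat k ω j) ^ 2)
    have hsql2 : ∀ j, Integrable (fun ω => (n (k+1) ω j - nstar j) ^ 2) P := fun j =>
      ((hnl2 (k+1) j).sub (memLp_const _)).integrable_sq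
    -- per-coordinate conditional expectation formula
    have hcj : ∀ j, P[fun ω => (n (k+1) ω j - nstar j) ^ 2|ℱ k]
        =ᵐ[P] fun ω => (b j ω) ^ 2 + (2 * a * b j ω) * (P[fun ω => Fhat k ω j|ℱ k]) ω
          + a ^ 2 * (P[fun ω => (Fhat k ω j) ^ 2|ℱ k]) ω := by
      intro j
      have heqf : (fun ω => (n (k+1) ω j - nstar j) ^ 2)
          = (((fun ω => (b j ω) ^ 2) + fun ω => (2 * a * b j ω) * Fhat k ω j)
              + fun ω => a ^ 2 * (Fhat k ω j) ^ 2) := by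
        funext ω
        simp only [Pi.add_apply]
        rw [hupdate]
        simp only [hbdef, Pi.add_apply, Pi.smul_apply, smul_eq_mul]
        ring
      rw [heqf]
      have int0 : Integrable (fun ω => (b j ω) ^ 2) P := (hbl2 j).integrable_sq
      have int1 : Integrable ((fun ω => (b j ω) ^ 2) + fun ω => (2 * a * b j ω) * Fhat k ω j) P :=
        int0.add (hintbY j)
      have int2 : Integrable (fun ω => a ^ 2 * (Fhat k ω j) ^ 2) P :=
        ((hFl2 k j).integrable_sq).const_mul _
      have e1 := condExp_add (μ := P) (m := ℱ k)
        (f := (fun ω => (b j ω) ^ 2) + fun ω => (2 * a * b j ω) * Fhat k ω j)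
        (g := fun ω => a ^ 2 * (Fhat k ω j) ^ 2) int1 int2
      have e2 := condExp_add (μ := P) (m := ℱ k)
        (f := fun ω => (b j ω) ^ 2) (g := fun ω => (2 * a * b j ω) * Fhat k ω j)
        int0 (hintbY j)
      filter_upwards [e1, e2, hc2 j, hc3 j] with ω h1 h2 h3 h4
      have hb2 := congrFun (hc1 j) ω
      simp only [Pi.add_apply] at h1 h2
      rw [h1, h2, hb2, h3, h4]
    -- weight pull-out
    have hcw : ∀ j, P[fun ω => w j * (n (k+1) ω j - nstar j) ^ 2|ℱ k]
        =ᵐ[P] fun ω => w j * (P[fun ω => (n (k+1) ω j - nstar j) ^ 2|ℱ k]) ω := by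
      intro j
      simpa [Pi.smul_apply, smul_eq_mul, Pi.smul_def] using
        condExp_smul (μ := P) (m := ℱ k) (w j) (fun ω => (n (k+1) ω j - nstar j) ^ 2)
    -- sum decomposition of X (k+1)
    have hXrw : (fun ω => wnormSq w (n (k+1) ω - nstar))
        = ∑ j : Fin N, (fun ω => w j * (n (k+1) ω j - nstar j) ^ 2) := by
      funext ω; simp [wnormSq, Finset.sum_apply, Pi.sub_apply]
    have hsum := condExp_finsetSum (μ := P) (m := ℱ k) (s := Finset.univ)
      (f := fun j => fun ω => w j * (n (k+1) ω j - nstar j) ^ 2)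
      (fun j _ => (hsql2 j).const_mul _)
    rw [hXrw]
    filter_upwards [hsum, ae_all_iff.2 hcj, ae_all_iff.2 hcw,
      ae_all_iff.2 (hunbiased k), ae_all_iff.2 (hsecond k)] with ω h1 h2 h3 h4 h5 hA
    have hstep1 : (P[∑ j : Fin N, (fun ω => w j * (n (k+1) ω j - nstar j) ^ 2)|ℱ k]) ω
        = ∑ j : Fin N, w j * ((b j ω) ^ 2 + (2 * a * b j ω) * (Fbar (n k ω) j)
          + a ^ 2 * (P[fun ω => (Fhat k ω j) ^ 2|ℱ k]) ω) := by
      rw [h1, Finset.sum_apply]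
      refine Finset.sum_congr rfl fun j _ => ?_
      rw [h3 j, h2 j, h4 j hA]
    rw [hstep1]
    have hstep2 : ∑ j : Fin N, w j * ((b j ω) ^ 2 + (2 * a * b j ω) * (Fbar (n k ω) j)
          + a ^ 2 * (P[fun ω => (Fhat k ω j) ^ 2|ℱ k]) ω)
        ≤ ∑ j : Fin N, w j * ((b j ω) + a * Fbar (n k ω) j) ^ 2 := by
      refine Finset.sum_le_sum fun j _ => ?_
      have h6 := h5 j hA
      have h7 := (hw j).le
      nlinarith [mul_nonneg h7 (mul_nonneg (sq_nonneg a) (sub_nonneg.2 h6))]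
    have hstep3 : ∑ j : Fin N, w j * ((b j ω) + a * Fbar (n k ω) j) ^ 2
        = wnormSq w (((1 - a) • n k ω + a • Fbar (n k ω)) - nstar) := by
      simp only [wnormSq, Pi.sub_apply, Pi.add_apply, Pi.smul_apply, smul_eq_mul]
      refine Finset.sum_congr rfl fun j _ => ?_
      simp only [hbdef]
      ring
    have h8 : wnorm w (n k ω - nstar) ≤ γ := hA k le_rfl
    have h9 := hcontr (n k ω) h8
    have h10 : 0 ≤ wnorm w (n k ω - nstar) := Real.sqrt_nonneg _
    have h13 : 0 ≤ wnorm w (((1 - a) • n k ω + a • Fbar (n k ω)) - nstar) := Real.sqrt_nonneg _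
    have h11 := hnormsq (((1 - a) • n k ω + a • Fbar (n k ω)) - nstar)
    have h12 := hnormsq (n k ω - nstar)
    have h14 : (wnorm w (((1 - a) • n k ω + a • Fbar (n k ω)) - nstar)) ^ 2
        ≤ (c * wnorm w (n k ω - nstar)) ^ 2 := by
      have := pow_le_pow_left₀ h13 h9 2
      simpa using this
    have h15 : (c * wnorm w (n k ω - nstar)) ^ 2 ≤ (wnorm w (n k ω - nstar)) ^ 2 := by
      nlinarith [sq_nonneg (wnorm w (n k ω - nstar)),
        mul_nonneg (mul_nonneg (sub_nonneg.2 hc'.le) (by linarith : (0:ℝ) ≤ 1 + c))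
          (sq_nonneg (wnorm w (n k ω - nstar)))]
    calc _ ≤ ∑ j : Fin N, w j * ((b j ω) + a * Fbar (n k ω) j) ^ 2 := hstep2
      _ = wnormSq w (((1 - a) • n k ω + a • Fbar (n k ω)) - nstar) := hstep3
      _ ≤ wnormSq w (n k ω - nstar) := by linarith
  -- one-step integral inequality
  have hstep : ∀ k, ∫ ω in A k, wnormSq w (n (k+1) ω - nstar) ∂P
      ≤ ∫ ω in A k, wnormSq w (n k ω - nstar) ∂P := by
    intro k
    rw [← setIntegral_condExp (ℱ.le k) (hXint (k+1)) (hAmeasF k)]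
    apply setIntegral_mono_ae_restrict integrable_condExp.integrableOn (hXint k).integrableOn
    rw [Filter.EventuallyLE, ae_restrict_iff' (hAmeas k)]
    exact hkey k
  -- exit events
  set Ex : ℕ → Set Ω := fun k => A k ∩ {ω | γ < wnorm w (n (k+1) ω - nstar)} with hEdef
  have hExmeas : ∀ k, MeasurableSet (Ex k) := by
    intro k
    refine (hAmeas k).inter ?_
    exact (((hwnmeas (k+1)).mono (ℱ.le (k+1)) le_rfl)) measurableSet_Ioi
  have hunion : ∀ k, A (k+1) ∪ Ex k = A k := by
    intro k
    ext ω
    simp only [hAdef, hEdef, Set.mem_union, Set.mem_inter_iff, Set.mem_setOf_eq]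
    constructor
    · rintro (h | ⟨h, _⟩)
      · exact fun t ht => h t (ht.trans (Nat.le_succ k))
      · exact h
    · intro h
      by_cases hlast : wnorm w (n (k+1) ω - nstar) ≤ γ
      · left
        intro t ht
        rcases Nat.le_add_one_iff.mp ht with ht' | ht'
        · exact h t ht'
        · rw [ht']; exact hlast
      · exact Or.inr ⟨h, not_le.mp hlast⟩
  have hdisj : ∀ k, Disjoint (A (k+1)) (Ex k) := by
    intro k
    rw [Set.disjoint_left]
    intro ω h1 h2
    exact absurd (h1 (k+1) le_rfl) (not_le.mpr h2.2)
  -- telescoping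
  set S : ℕ → ℝ := fun k => ∫ ω in A k, wnormSq w (n k ω - nstar) ∂P with hSdef
  have hsplit : ∀ k, S (k+1) + ∫ ω in Ex k, wnormSq w (n (k+1) ω - nstar) ∂P
      = ∫ ω in A k, wnormSq w (n (k+1) ω - nstar) ∂P := by
    intro k
    rw [← hunion k, setIntegral_union (hdisj k) (hExmeas k)
      ((hXint (k+1)).integrableOn) ((hXint (k+1)).integrableOn)]
  have hmarkov : ∀ k, γ ^ 2 * (P (Ex k)).toReal
      ≤ ∫ ω in Ex k, wnormSq w (n (k+1) ω - nstar) ∂P := by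
    intro k
    have hconst : ∫ (_ : Ω) in Ex k, γ ^ 2 ∂P = (P (Ex k)).toReal * γ ^ 2 := by
      rw [setIntegral_const, smul_eq_mul, measureReal_def]
    rw [mul_comm, ← hconst]
    refine setIntegral_mono_on integrableOn_const
      ((hXint (k+1)).integrableOn) (hExmeas k) ?_
    intro ω hω
    have h1 : γ < wnorm w (n (k+1) ω - nstar) := hω.2
    have := (Real.lt_sqrt hγ.le).mp h1
    linarith
  have htel : ∀ k, γ ^ 2 * (P (Ex k)).toReal ≤ S k - S (k+1) := by
    intro k
    have h1 := hmarkov k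
    have h2 := hsplit k
    have h3 := hstep k
    simp only [hSdef] at *
    linarith
  have hsum : γ ^ 2 * ∑ k ∈ Finset.range J, (P (Ex k)).toReal ≤ S 0 := by
    have h1 : ∑ k ∈ Finset.range J, γ ^ 2 * (P (Ex k)).toReal
        ≤ ∑ k ∈ Finset.range J, (S k - S (k+1)) :=
      Finset.sum_le_sum fun k _ => htel k
    rw [Finset.sum_range_sub' S J] at h1
    have hSJ : 0 ≤ S J := setIntegral_nonneg (hAmeas J) fun ω _ => hSqnn _
    rw [Finset.mul_sum]
    linarith
  have hS0 : S 0 = wnormSq w (n0 - nstar) := by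
    have hA0 : A 0 = Set.univ := by
      ext ω
      simp only [hAdef, Set.mem_setOf_eq, Set.mem_univ, iff_true]
      intro t ht
      interval_cases t
      rw [hn0]; exact hball0
    simp only [hSdef, hA0, Measure.restrict_univ]
    have : (fun ω => wnormSq w (n 0 ω - nstar)) = fun _ : Ω => wnormSq w (n0 - nstar) := by
      funext ω; rw [hn0]
    rw [this, integral_const, probReal_univ, one_smul]
  have hPsum : ∑ k ∈ Finset.range J, (P (Ex k)).toReal ≤ wnormSq w (n0 - nstar) / γ ^ 2 := by
    rw [le_div_iff₀ (by positivity)]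
    rw [hS0] at hsum
    linarith
  -- covering the bad event by first-exit events
  have hcover : {ω : Ω | ∃ j : ℕ, 1 ≤ j ∧ j ≤ J ∧ γ < wnorm w (n j ω - nstar)}
      ⊆ ⋃ k ∈ Finset.range J, Ex k := by
    rintro ω ⟨j, hj1, hjJ, hj⟩
    have hex : ∃ m, γ < wnorm w (n m ω - nstar) := ⟨j, hj⟩
    set j0 := Nat.find hex with hj0def
    have hspec : γ < wnorm w (n j0 ω - nstar) := Nat.find_spec hex
    have hmin : ∀ m < j0, ¬ γ < wnorm w (n m ω - nstar) := fun m hm => Nat.find_min hex hm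
    have hj0pos : 1 ≤ j0 := by
      by_contra h
      push_neg at h
      interval_cases j0
      rw [hn0] at hspec
      exact absurd hspec (not_lt.mpr hball0)
    have hj0le : j0 ≤ j := Nat.find_min' hex hj
    refine Set.mem_biUnion (Finset.mem_range.mpr ?_) (?_ : ω ∈ Ex (j0 - 1))
    · omega
    · constructor
      · intro t ht
        have : t < j0 := by omega
        exact not_lt.mp (hmin t this)
      · have : j0 - 1 + 1 = j0 := by omega
        rw [this]
        exact hspec
  -- conclusion
  refine le_trans (measure_mono hcover) ?_
  refine le_trans (measure_biUnion_finset_le _ _) ?_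
  have heq : ∑ k ∈ Finset.range J, P (Ex k)
      = ENNReal.ofReal (∑ k ∈ Finset.range J, (P (Ex k)).toReal) := by
    rw [ENNReal.ofReal_sum_of_nonneg fun k _ => ENNReal.toReal_nonneg]
    exact Finset.sum_congr rfl fun k _ => (ENNReal.ofReal_toReal (measure_ne_top P _)).symm
  rw [heq]
  exact ENNReal.ofReal_le_ofReal hPsum
end

section
/- Let N ≥ 1, let m ∈ {1,…,N}, let w ∈ ℝ^N have strictly positive entries, let c ∈ [0,1), and let n, n*, y ∈ ℝ^N satisfy ‖y − n*‖_w ≤ c·‖n − n*‖_w. For each subset S ⊆ {1,…,N} define n_S ∈ ℝ^N by n_S(j) = y(j) if j ∈ S and n_S(j) = n(j) otherwise. Then the average of ‖n_S − n*‖_w² over all subsets S of cardinality m satisfies (1/C(N,m)) · Σ_{S ⊆ {1,…,N}, |S| = m} ‖n_S − n*‖_w² ≤ (1 − m(1−c²)/N) · ‖n − n*‖_w², where C(N,m) is the binomial coefficient. -/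
open Finset

lemma count_mem_powersetCard {N m : ℕ} (hm : 1 ≤ m) (j : Fin N) :
    (((Finset.powersetCard m (Finset.univ : Finset (Fin N)))).filter (fun S => j ∈ S)).card
      = (N - 1).choose (m - 1) := by
  have hset : ((Finset.powersetCard m (Finset.univ : Finset (Fin N)))).filter (fun S => j ∈ S)
      = (Finset.powersetCard (m - 1) ((Finset.univ : Finset (Fin N)).erase j)).image (insert j) := by
    ext S
    simp only [mem_filter, mem_powersetCard, mem_image]
    constructor
    · rintro ⟨⟨-, hcard⟩, hj⟩
      refine ⟨S.erase j, ⟨fun x hx => ?_, ?_⟩, ?_⟩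
      · rcases mem_erase.1 hx with ⟨hx1, -⟩
        exact mem_erase.2 ⟨hx1, mem_univ x⟩
      · rw [card_erase_of_mem hj, hcard]
      · exact insert_erase hj
    · rintro ⟨T, ⟨hT, hTcard⟩, rfl⟩
      have hjT : j ∉ T := fun h => (mem_erase.1 (hT h)).1 rfl
      refine ⟨⟨subset_univ _, ?_⟩, mem_insert_self _ _⟩
      rw [card_insert_of_notMem hjT, hTcard]
      omega
  rw [hset, Finset.card_image_of_injOn, Finset.card_powersetCard,
    Finset.card_erase_of_mem (mem_univ j), Finset.card_univ, Fintype.card_fin]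
  intro T1 h1 T2 h2 he
  have hj1 : j ∉ T1 := fun h => (mem_erase.1 ((mem_powersetCard.1 h1).1 h)).1 rfl
  have hj2 : j ∉ T2 := fun h => (mem_erase.1 ((mem_powersetCard.1 h2).1 h)).1 rfl
  have := congrArg (fun s => Finset.erase s j) he
  simpa [Finset.erase_insert hj1, Finset.erase_insert hj2] using this

/-- Block-coordinate averaging: if `‖y − n*‖_w ≤ c ‖n − n*‖_w`, then the average over all
subsets `S` of cardinality `m` of `‖n_S − n*‖_w²`, where `n_S` agrees with `y` on `S` and
with `n` off `S`, is at most `(1 − m(1−c²)/N) ‖n − n*‖_w²`. -/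
theorem block_coordinate_average_contraction {N : ℕ} (hN : 1 ≤ N) (m : ℕ)
    (hm1 : 1 ≤ m) (hmN : m ≤ N) (w : Fin N → ℝ) (hw : ∀ j, 0 < w j)
    (c : ℝ) (hc0 : 0 ≤ c) (hc1 : c < 1) (n nstar y : Fin N → ℝ)
    (hy : wnorm w (y - nstar) ≤ c * wnorm w (n - nstar)) :
    (1 / (N.choose m : ℝ)) *
        ∑ S ∈ Finset.powersetCard m (Finset.univ : Finset (Fin N)),
          wnormSq w ((fun j => if j ∈ S then y j else n j) - nstar) ≤
      (1 - (m : ℝ) * (1 - c ^ 2) / N) * wnormSq w (n - nstar) := by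
  set A := wnormSq w (y - nstar) with hAdef
  set B := wnormSq w (n - nstar) with hBdef
  have hA0 : 0 ≤ A :=
    Finset.sum_nonneg fun j _ => mul_nonneg (hw j).le (sq_nonneg _)
  have hB0 : 0 ≤ B :=
    Finset.sum_nonneg fun j _ => mul_nonneg (hw j).le (sq_nonneg _)
  have hAB : A ≤ c ^ 2 * B := by
    have h1 : Real.sqrt A ≤ c * Real.sqrt B := hy
    have h2 := mul_self_le_mul_self (Real.sqrt_nonneg A) h1
    calc A = Real.sqrt A * Real.sqrt A := (Real.mul_self_sqrt hA0).symm
      _ ≤ (c * Real.sqrt B) * (c * Real.sqrt B) := h2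
      _ = c ^ 2 * B := by
          rw [mul_mul_mul_comm, Real.mul_self_sqrt hB0]; ring
  have hCpos : 0 < N.choose m := Nat.choose_pos hmN
  have hcard : (Finset.powersetCard m (Finset.univ : Finset (Fin N))).card = N.choose m := by
    rw [Finset.card_powersetCard, Finset.card_univ, Fintype.card_fin]
  have hKC : (N - 1).choose (m - 1) ≤ N.choose m := by
    have h := Finset.card_filter_le (Finset.powersetCard m (Finset.univ : Finset (Fin N)))
      (fun S => (⟨0, hN⟩ : Fin N) ∈ S)
    rwa [count_mem_powersetCard hm1 ⟨0, hN⟩, hcard] at h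
  have key : ∑ S ∈ Finset.powersetCard m (Finset.univ : Finset (Fin N)),
      wnormSq w ((fun j => if j ∈ S then y j else n j) - nstar)
      = ((N - 1).choose (m - 1) : ℝ) * A
        + ((N.choose m : ℝ) - (N - 1).choose (m - 1)) * B := by
    unfold wnormSq
    rw [Finset.sum_comm]
    have hpt : ∀ j : Fin N,
        ∑ S ∈ Finset.powersetCard m (Finset.univ : Finset (Fin N)),
          w j * (((fun j => if j ∈ S then y j else n j) - nstar) j) ^ 2
        = ((N - 1).choose (m - 1) : ℝ) * (w j * ((y - nstar) j) ^ 2)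
          + ((N.choose m : ℝ) - (N - 1).choose (m - 1)) * (w j * ((n - nstar) j) ^ 2) := by
      intro j
      have heq : ∀ S ∈ Finset.powersetCard m (Finset.univ : Finset (Fin N)),
          w j * (((fun j => if j ∈ S then y j else n j) - nstar) j) ^ 2
          = if j ∈ S then w j * ((y - nstar) j) ^ 2 else w j * ((n - nstar) j) ^ 2 := by
        intro S _
        by_cases h : j ∈ S <;> simp [h]
      rw [Finset.sum_congr rfl heq, Finset.sum_ite, Finset.sum_const, Finset.sum_const,
        Finset.filter_not, Finset.card_sdiff_of_subset (Finset.filter_subset _ _),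
        count_mem_powersetCard hm1 j, hcard]
      rw [nsmul_eq_mul, nsmul_eq_mul, Nat.cast_sub hKC]
    rw [Finset.sum_congr rfl fun j _ => hpt j, Finset.sum_add_distrib, ← Finset.mul_sum,
      ← Finset.mul_sum]
    rfl
  rw [key]
  have hKNmC : (N - 1).choose (m - 1) * N = m * N.choose m := by
    have h := Nat.add_one_mul_choose_eq (N - 1) (m - 1)
    have h1 : N - 1 + 1 = N := Nat.succ_pred_eq_of_pos hN
    have h2 : m - 1 + 1 = m := Nat.succ_pred_eq_of_pos hm1
    rw [h1, h2] at h
    calc (N - 1).choose (m - 1) * N = N * (N - 1).choose (m - 1) := Nat.mul_comm _ _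
      _ = N.choose m * m := h
      _ = m * N.choose m := Nat.mul_comm _ _
  have hKNmC' : ((N - 1).choose (m - 1) : ℝ) * N = m * N.choose m := by
    exact_mod_cast hKNmC
  have hCpos' : (0 : ℝ) < N.choose m := by exact_mod_cast hCpos
  have hNpos' : (0 : ℝ) < N := by exact_mod_cast hN
  have hK0 : (0 : ℝ) ≤ ((N - 1).choose (m - 1) : ℝ) := Nat.cast_nonneg _
  rw [div_mul_eq_mul_div, one_mul, div_le_iff₀ hCpos']
  have hstep : ((N - 1).choose (m - 1) : ℝ) * A
        + ((N.choose m : ℝ) - (N - 1).choose (m - 1)) * B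
      ≤ ((N - 1).choose (m - 1) : ℝ) * (c ^ 2 * B)
        + ((N.choose m : ℝ) - (N - 1).choose (m - 1)) * B := by
    have := mul_le_mul_of_nonneg_left hAB hK0
    linarith
  refine hstep.trans (le_of_eq ?_)
  have h3 : (m : ℝ) * N.choose m / N = ((N - 1).choose (m - 1) : ℝ) := by
    field_simp
    linarith [hKNmC']
  have h4 : (1 - (m : ℝ) * (1 - c ^ 2) / N) * B * N.choose m
      = B * N.choose m - ((m : ℝ) * N.choose m / N) * (1 - c ^ 2) * B := by ring
  rw [h4, h3]
  ring
end

section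
/- Fix N ≥ 1, m ∈ {1,…,N}, a weight vector w ∈ ℝ^N with strictly positive entries, n* ∈ ℝ^N, γ > 0, a ∈ (0,1], c ∈ (0,1), and a map F̄ : ℝ^N → ℝ^N such that the damped map G(n) = (1−a)·n + a·F̄(n) satisfies ‖G(n) − n*‖_w ≤ c·‖n − n*‖_w for all n ∈ B_γ(n*). Let (Ω, ℱ, (ℱ_k)_{k≥0}, P) be a filtered probability space and (n_k)_{k≥0} an adapted ℝ^N-valued process with n_0 deterministic and n_0 ∈ B_γ(n*), defined by the randomized block-coordinate update n_{k+1}(j) = (1−a)·n_k(j) + a·F̂_k(j) for j ∈ S_k and n_{k+1}(j) = n_k(j) for j ∉ S_k, where: S_k is an ℱ_{k+1}-measurable random subset of {1,…,N} of cardinality m whose conditional distribution given ℱ_k is uniform over all C(N,m) subsets of cardinality m; and F̂_k : Ω → ℝ^N is ℱ_{k+1}-measurable with square-integrable components satisfying, almost surely on the event {n_t ∈ B_γ(n*) for all t ≤ k}, E[F̂_k(j) | ℱ_k, S_k] = F̄(n_k)(j) and E[F̂_k(j)² | ℱ_k, S_k] ≤ (F̄(n_k)(j))² for every j. Let 𝟙_k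 denote the indicator of the event {n_t ∈ B_γ(n*) for all t ≤ k−1}. Then for every k ≥ 1, E[‖n_k − n*‖_w² · 𝟙_k] ≤ (1 − m(1−c²)/N)^k · ‖n_0 − n*‖_w². -/
open MeasureTheory

def NseqRBC {N : ℕ} (n0 : Fin N → ℝ) (a : ℝ) (Fbar : (Fin N → ℝ) → (Fin N → ℝ)) :
    ℕ → (ℕ → Finset (Fin N)) → (Fin N → ℝ)
  | 0, _ => n0
  | (k+1), σ => fun j => if j ∈ σ k then
      (1 - a) * NseqRBC n0 a Fbar k σ j + a * Fbar (NseqRBC n0 a Fbar k σ) j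
      else NseqRBC n0 a Fbar k σ j

lemma NseqRBC_congr {N : ℕ} (n0 : Fin N → ℝ) (a : ℝ) (Fbar : (Fin N → ℝ) → (Fin N → ℝ)) :
    ∀ (k : ℕ) (σ σ' : ℕ → Finset (Fin N)), (∀ t, t < k → σ t = σ' t) →
      NseqRBC n0 a Fbar k σ = NseqRBC n0 a Fbar k σ'
  | 0, σ, σ', _ => rfl
  | (k+1), σ, σ', h => by
      have ih := NseqRBC_congr n0 a Fbar k σ σ' (fun t ht => h t (ht.trans (Nat.lt_succ_self k)))
      funext j
      simp only [NseqRBC, ih, h k (Nat.lt_succ_self k)]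

lemma count_subsets_containing {N m : ℕ} (hm1 : 1 ≤ m) (j : Fin N) :
    (Finset.univ.filter (fun s : Finset (Fin N) => s.card = m ∧ j ∈ s)).card
      = (N - 1).choose (m - 1) := by
  classical
  have key : (Finset.univ.filter (fun s : Finset (Fin N) => s.card = m ∧ j ∈ s)).card
      = (Finset.powersetCard (m-1) ((Finset.univ : Finset (Fin N)).erase j)).card := by
    apply Finset.card_nbij' (fun s => s.erase j) (fun t => insert j t)
    · intro s hs
      simp only [Finset.mem_coe, Finset.mem_filter, Finset.mem_univ, true_and] at hs
      rw [Finset.mem_coe, Finset.mem_powersetCard]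
      constructor
      · intro x hx
        rcases Finset.mem_erase.mp hx with ⟨hxj, _⟩
        exact Finset.mem_erase.mpr ⟨hxj, Finset.mem_univ x⟩
      · rw [Finset.card_erase_of_mem hs.2, hs.1]
    · intro t ht
      rw [Finset.mem_coe, Finset.mem_powersetCard] at ht
      have hjt : j ∉ t := fun hjt => (Finset.mem_erase.mp (ht.1 hjt)).1 rfl
      simp only [Finset.mem_coe, Finset.mem_filter, Finset.mem_univ, true_and]
      refine ⟨?_, Finset.mem_insert_self j t⟩
      rw [Finset.card_insert_of_notMem hjt, ht.2]
      omega
    · intro s hs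
      simp only [Finset.mem_coe, Finset.mem_filter, Finset.mem_univ, true_and] at hs
      exact Finset.insert_erase hs.2
    · intro t ht
      rw [Finset.mem_coe, Finset.mem_powersetCard] at ht
      have hjt : j ∉ t := fun hjt => (Finset.mem_erase.mp (ht.1 hjt)).1 rfl
      exact Finset.erase_insert hjt
  rw [key, Finset.card_powersetCard, Finset.card_erase_of_mem (Finset.mem_univ j),
    Finset.card_univ, Fintype.card_fin]

set_option maxHeartbeats 1000000 in
/-- Convergence of the randomized block-coordinate fixed-point iteration: with uniformly
random blocks `S_k` of size `m` and conditionally unbiased coordinate estimates with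
conditional second moments bounded by the squared means, the iterates satisfy
`E[‖n_k − n*‖_w² 𝟙_k] ≤ (1 − m(1−c²)/N)^k ‖n_0 − n*‖_w²`. -/
theorem rbcfp_linear_convergence {N : ℕ} (hN : 1 ≤ N) (m : ℕ) (hm1 : 1 ≤ m)
    (hmN : m ≤ N) (w : Fin N → ℝ) (hw : ∀ j, 0 < w j) (nstar : Fin N → ℝ)
    (γ : ℝ) (hγ : 0 < γ) (a : ℝ) (ha : 0 < a) (ha' : a ≤ 1)
    (c : ℝ) (hc : 0 < c) (hc' : c < 1)
    (Fbar : (Fin N → ℝ) → (Fin N → ℝ))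
    (hcontr : ∀ n : Fin N → ℝ, wnorm w (n - nstar) ≤ γ →
      wnorm w (((1 - a) • n + a • Fbar n) - nstar) ≤ c * wnorm w (n - nstar))
    {Ω : Type*} {m0 : MeasurableSpace Ω} (P : Measure Ω) [IsProbabilityMeasure P]
    (ℱ : Filtration ℕ m0) (n : ℕ → Ω → Fin N → ℝ) (hadapt : StronglyAdapted ℱ n)
    (n0 : Fin N → ℝ) (hn0 : ∀ ω, n 0 ω = n0) (hball0 : wnorm w (n0 - nstar) ≤ γ)
    (S : ℕ → Ω → Finset (Fin N)) (hScard : ∀ k ω, (S k ω).card = m)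
    (hSmeas : ∀ k, MeasurableSpace.comap (S k) (⊤ : MeasurableSpace (Finset (Fin N))) ≤
      ℱ (k + 1))
    (hSuniform : ∀ k, ∀ s : Finset (Fin N), s.card = m →
      ∀ᵐ ω ∂P, (P[fun ω => if S k ω = s then (1 : ℝ) else 0|ℱ k]) ω =
        1 / (N.choose m : ℝ))
    (Fhat : ℕ → Ω → Fin N → ℝ)
    (hFmeas : ∀ k, StronglyMeasurable[ℱ (k + 1)] (Fhat k))
    (hFl2 : ∀ k j, MemLp (fun ω => Fhat k ω j) 2 P)
    (hupdate : ∀ k ω j, n (k + 1) ω j =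
      if j ∈ S k ω then (1 - a) * n k ω j + a * Fhat k ω j else n k ω j)
    (hunbiased : ∀ k j, ∀ᵐ ω ∂P, (∀ t ≤ k, wnorm w (n t ω - nstar) ≤ γ) →
      (P[fun ω => Fhat k ω j|ℱ k ⊔
        MeasurableSpace.comap (S k) (⊤ : MeasurableSpace (Finset (Fin N)))]) ω =
        Fbar (n k ω) j)
    (hsecond : ∀ k j, ∀ᵐ ω ∂P, (∀ t ≤ k, wnorm w (n t ω - nstar) ≤ γ) →
      (P[fun ω => (Fhat k ω j) ^ 2|ℱ k ⊔
        MeasurableSpace.comap (S k) (⊤ : MeasurableSpace (Finset (Fin N)))]) ω ≤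
        (Fbar (n k ω) j) ^ 2) :
    ∀ k : ℕ, 1 ≤ k →
      ∫ ω, Set.indicator {ω : Ω | ∀ t < k, wnorm w (n t ω - nstar) ≤ γ}
          (fun ω => wnormSq w (n k ω - nstar)) ω ∂P ≤
        (1 - (m : ℝ) * (1 - c ^ 2) / N) ^ k * wnormSq w (n0 - nstar) := by
  classical
  -- numeric facts
  have hN0 : (0:ℝ) < N := by exact_mod_cast hN
  have hmR : (0:ℝ) < m := by exact_mod_cast hm1
  have hmNR : (m:ℝ) ≤ N := by exact_mod_cast hmN
  set r : ℝ := (m:ℝ) / N with hrdef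
  have hr0 : 0 ≤ r := by positivity
  have hr1 : r ≤ 1 := by rw [hrdef, div_le_one hN0]; exact hmNR
  set ρ : ℝ := 1 - (m : ℝ) * (1 - c ^ 2) / N with hρdef
  have hρr : ρ = 1 - r * (1 - c ^ 2) := by rw [hρdef, hrdef]; ring
  have hc2 : 0 < 1 - c ^ 2 := by nlinarith
  have hρ0 : 0 ≤ ρ := by nlinarith
  -- wnorm facts
  have hwsq_nonneg : ∀ x : Fin N → ℝ, 0 ≤ wnormSq w x := by
    intro x
    exact Finset.sum_nonneg fun j _ => mul_nonneg (hw j).le (sq_nonneg _)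
  have hwnorm_nonneg : ∀ x : Fin N → ℝ, 0 ≤ wnorm w x := fun x => Real.sqrt_nonneg _
  have hwnorm_sq : ∀ x : Fin N → ℝ, (wnorm w x) ^ 2 = wnormSq w x := fun x =>
    Real.sq_sqrt (hwsq_nonneg x)
  -- measurability of the process
  have hnmj : ∀ t j, Measurable[ℱ t] (fun ω => n t ω j) := fun t j =>
    (measurable_pi_apply j).comp (hadapt t).measurable
  have hwnt : ∀ t, Measurable[ℱ t] (fun ω => wnorm w (n t ω - nstar)) := by
    intro t
    have : (fun ω => wnorm w (n t ω - nstar))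
        = fun ω => Real.sqrt (∑ j, w j * (n t ω j - nstar j) ^ 2) := by
      funext ω; simp [wnorm, wnormSq, Pi.sub_apply]
    rw [this]
    exact Real.continuous_sqrt.measurable.comp <| Finset.measurable_sum _ fun j _ =>
      (measurable_const.mul (((hnmj t j).sub measurable_const).pow_const 2))
  -- the good events
  set A : ℕ → Set Ω := fun k => {ω | ∀ t ≤ k, wnorm w (n t ω - nstar) ≤ γ} with hAdef
  set B : ℕ → Set Ω := fun k => {ω | ∀ t < k, wnorm w (n t ω - nstar) ≤ γ} with hBdef
  have hBA : ∀ k ω, ω ∈ B (k+1) ↔ ω ∈ A k := by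
    intro k ω; constructor
    · intro h t ht; exact h t (Nat.lt_succ_of_le ht)
    · intro h t ht; exact h t (Nat.lt_succ_iff.mp ht)
  have hAsubB : ∀ k, A k ⊆ B k := fun k ω h t ht => h t ht.le
  have hA_meas : ∀ k, MeasurableSet[ℱ k] (A k) := by
    intro k
    have : A k = ⋂ (t : ℕ) (_ : t ≤ k), {ω | wnorm w (n t ω - nstar) ≤ γ} := by
      ext ω; simp [hAdef]
    rw [this]
    exact MeasurableSet.iInter fun t => MeasurableSet.iInter fun ht =>
      ((hwnt t).mono (ℱ.mono ht) le_rfl) measurableSet_Iic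
  have hB_meas : ∀ k, MeasurableSet[ℱ k] (B k) := by
    intro k
    have : B k = ⋂ (t : ℕ) (_ : t < k), {ω | wnorm w (n t ω - nstar) ≤ γ} := by
      ext ω; simp [hBdef]
    rw [this]
    exact MeasurableSet.iInter fun t => MeasurableSet.iInter fun ht =>
      ((hwnt t).mono (ℱ.mono ht.le) le_rfl) measurableSet_Iic
  -- measurability of S-events
  have hSm : ∀ t (sv : Finset (Fin N)), MeasurableSet[ℱ (t+1)] {ω | S t ω = sv} := by
    intro t sv
    apply hSmeas t
    refine ⟨{sv}, trivial, ?_⟩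
    ext ω; simp
  have hSmk : ∀ t k, t < k → ∀ sv : Finset (Fin N), MeasurableSet[ℱ k] {ω | S t ω = sv} :=
    fun t k ht sv => (ℱ.mono (by omega)) _ (hSm t sv)
  -- the deterministic version of the process
  set M : ℕ → Ω → (Fin N → ℝ) := fun k ω => NseqRBC n0 a Fbar k (fun t => S t ω) with hMdef
  have hfac : ∀ (k : ℕ) (f : (Fin N → ℝ) → ℝ), ∃ g : (Fin k → Finset (Fin N)) → ℝ,
      ∀ ω, f (M k ω) = g (fun t => S t.val ω) := by
    intro k f
    refine ⟨fun v => f (NseqRBC n0 a Fbar k (fun t => if h : t < k then v ⟨t, h⟩ else ∅)),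
      fun ω => ?_⟩
    have := NseqRBC_congr n0 a Fbar k (fun t => S t ω)
      (fun t => if h : t < k then S t ω else ∅) (fun t ht => by simp [ht])
    simp only [hMdef, this]
  have hgm : ∀ (k : ℕ) (g : (Fin k → Finset (Fin N)) → ℝ),
      Measurable[ℱ k] (fun ω => g (fun t => S t.val ω)) := by
    intro k g
    have hrw : (fun ω => g (fun t : Fin k => S t.val ω))
        = fun ω => ∑ v : Fin k → Finset (Fin N),
            if (fun t : Fin k => S t.val ω) = v then g v else 0 := by
      funext ω
      rw [Finset.sum_ite_eq]
      simp
    rw [hrw]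
    apply Finset.measurable_sum
    intro v _
    have hset : MeasurableSet[ℱ k] {ω | (fun t : Fin k => S t.val ω) = v} := by
      have : {ω | (fun t : Fin k => S t.val ω) = v} = ⋂ t : Fin k, {ω | S t.val ω = v t} := by
        ext ω; simp [funext_iff]
      rw [this]
      exact MeasurableSet.iInter fun t => hSmk t.val k t.isLt (v t)
    exact Measurable.ite hset measurable_const measurable_const
  have hMm : ∀ (k : ℕ) (f : (Fin N → ℝ) → ℝ), Measurable[ℱ k] (fun ω => f (M k ω)) := by
    intro k f
    obtain ⟨g, hg⟩ := hfac k f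
    have : (fun ω => f (M k ω)) = fun ω => g (fun t : Fin k => S t.val ω) := funext hg
    rw [this]; exact hgm k g
  have hMb : ∀ (k : ℕ) (f : (Fin N → ℝ) → ℝ), ∃ C, ∀ ω, |f (M k ω)| ≤ C := by
    intro k f
    obtain ⟨g, hg⟩ := hfac k f
    refine ⟨Finset.univ.sup' Finset.univ_nonempty (fun v => |g v|), fun ω => ?_⟩
    rw [hg]
    exact Finset.le_sup' (f := fun v => |g v|) (Finset.mem_univ _)
  -- integrability helper
  have hIntBdd : ∀ (f : Ω → ℝ), Measurable f → (∃ C, ∀ ω, |f ω| ≤ C) → Integrable f P := by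
    rintro f hf ⟨C, hC⟩
    exact (integrable_const C).mono' hf.aestronglyMeasurable
      (ae_of_all _ fun ω => by simpa [Real.norm_eq_abs] using hC ω)
    -- pull-out property with the uniform distribution of S k
  have hpull : ∀ (k : ℕ) (g : Ω → ℝ), Measurable[ℱ k] g → Integrable g P →
      ∀ s : Finset (Fin N), s.card = m →
      ∫ ω, g ω * (if S k ω = s then (1:ℝ) else 0) ∂P
        = (1 / (N.choose m : ℝ)) * ∫ ω, g ω ∂P := by
    intro k g hgmeas hgint s hs
    set e : Ω → ℝ := fun ω => if S k ω = s then (1:ℝ) else 0 with hedef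
    have hem : Measurable e := Measurable.ite ((ℱ.le (k+1)) _ (hSm k s))
      measurable_const measurable_const
    have heb : ∀ ω, ‖e ω‖ ≤ 1 := by
      intro ω; rw [hedef]; dsimp only; split <;> simp
    have heint : Integrable e P := hIntBdd e hem ⟨1, fun ω => by
      simpa [Real.norm_eq_abs] using heb ω⟩
    have hge : Integrable (g * e) P := by
      have h := hgint.bdd_mul hem.aestronglyMeasurable (ae_of_all _ heb)
      exact h.congr (ae_of_all _ fun ω => mul_comm _ _)
    calc ∫ ω, g ω * e ω ∂P
        = ∫ ω, (P[g * e|ℱ k]) ω ∂P := (integral_condExp (μ := P) (f := g * e) (ℱ.le k)).symm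
      _ = ∫ ω, g ω * (P[e|ℱ k]) ω ∂P := integral_congr_ae
          (condExp_mul_of_stronglyMeasurable_left hgmeas.stronglyMeasurable hge heint)
      _ = ∫ ω, g ω * (1/(N.choose m : ℝ)) ∂P := by
          refine integral_congr_ae ?_
          filter_upwards [hSuniform k s hs] with ω hω
          rw [hedef, hω]
      _ = (∫ ω, g ω ∂P) * (1/(N.choose m : ℝ)) := integral_mul_const _ _
      _ = (1/(N.choose m : ℝ)) * ∫ ω, g ω ∂P := mul_comm _ _
  -- counting ratio
  have hratio : ((N - 1).choose (m - 1) : ℝ) * (1 / (N.choose m : ℝ)) = r := by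
    have hid := Nat.add_one_mul_choose_eq (N - 1) (m - 1)
    rw [Nat.sub_add_cancel hN,
      Nat.sub_add_cancel hm1] at hid
    have hch : (0:ℝ) < (N.choose m : ℝ) := by exact_mod_cast Nat.choose_pos hmN
    have hidR : (N:ℝ) * ((N-1).choose (m-1) : ℝ) = (N.choose m : ℝ) * m := by
      exact_mod_cast hid
    rw [hrdef]
    field_simp
    nlinarith [hidR]
  -- the process agrees with the deterministic recursion on the good event
  have hnM : ∀ k, ∀ᵐ ω ∂P, ω ∈ B k → n k ω = M k ω := by
    intro k
    induction k with
    | zero =>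
      refine ae_of_all _ fun ω _ => ?_
      rw [hn0 ω]; rfl
    | succ k ih =>
      -- first: on A k, Fhat k = Fbar (M k)  (variance collapse)
      have hFe : ∀ j, ∀ᵐ ω ∂P, ω ∈ A k → Fhat k ω j = Fbar (M k ω) j := by
        intro j
        set 𝒢 := ℱ k ⊔ MeasurableSpace.comap (S k) (⊤ : MeasurableSpace (Finset (Fin N)))
          with h𝒢def
        have h𝒢 : 𝒢 ≤ m0 := sup_le (ℱ.le k) ((hSmeas k).trans (ℱ.le (k+1)))
        set fh : Ω → ℝ := fun ω => Fhat k ω j with hfhdef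
        have hf2 : MemLp fh 2 P := hFl2 k j
        have hfint : Integrable fh P := hf2.integrable one_le_two
        have hfsq : Integrable (fun ω => fh ω ^ 2) P := hf2.integrable_sq
        set V : Ω → ℝ := fun ω => Fbar (M k ω) j with hVdef
        have hVmF : Measurable[ℱ k] V := hMm k (fun x => Fbar x j)
        have hVm0 : Measurable[m0] V := hVmF.mono (ℱ.le k) le_rfl
        obtain ⟨CV, hCV⟩ := hMb k (fun x => Fbar x j)
        have hVint : Integrable V P := hIntBdd V hVm0 ⟨CV, hCV⟩
        have hVVint : Integrable (fun ω => V ω * V ω) P := by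
          refine hIntBdd _ ((hVm0.mul hVm0 : Measurable[m0] _)) ⟨CV * CV, fun ω => ?_⟩
          rw [abs_mul]
          exact mul_le_mul (hCV ω) (hCV ω) (abs_nonneg _) ((abs_nonneg _).trans (hCV ω))
        have hAm0 : MeasurableSet[m0] (A k) := (ℱ.le k) _ (hA_meas k)
        have hAmG : MeasurableSet[𝒢] (A k) := le_sup_left (α := MeasurableSpace Ω) _ (hA_meas k)
        -- a.e. identifications on A k
        have haeV : ∀ᵐ ω ∂P, ω ∈ A k → Fbar (n k ω) j = V ω := by
          filter_upwards [ih] with ω hω hA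
          rw [hω (hAsubB k hA), hVdef]
        have hae1 : ∀ᵐ ω ∂P, ω ∈ A k → (P[fh|𝒢]) ω = V ω := by
          filter_upwards [hunbiased k j, haeV] with ω h1 h2 hA
          rw [hfhdef, h𝒢def]
          rw [h1 hA]
          exact h2 hA
        have hae2 : ∀ᵐ ω ∂P, ω ∈ A k → (P[fun ω => fh ω ^ 2|𝒢]) ω ≤ V ω * V ω := by
          filter_upwards [hsecond k j, haeV] with ω h1 h2 hA
          have := h1 hA
          rw [h2 hA] at this
          calc (P[fun ω => fh ω ^ 2|𝒢]) ω ≤ V ω ^ 2 := this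
            _ = V ω * V ω := sq (V ω) ▸ (sq (V ω)).symm ▸ (by ring)
        -- integrability of the product
        have hVfint : Integrable (fun ω => V ω * fh ω) P :=
          hfint.bdd_mul hVm0.aestronglyMeasurable (c := CV) (ae_of_all _ fun ω => by
            simpa [Real.norm_eq_abs] using hCV ω)
        -- cross term
        have hIcross : ∫ ω in A k, V ω * fh ω ∂P = ∫ ω in A k, V ω * V ω ∂P := by
          have hmul : P[(fun ω => V ω * fh ω)|𝒢] =ᵐ[P] fun ω => V ω * (P[fh|𝒢]) ω :=
            condExp_mul_of_stronglyMeasurable_left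
              ((hVmF.mono (by rw [h𝒢def]; exact le_sup_left) le_rfl :
                Measurable[𝒢] V).stronglyMeasurable) hVfint hfint
          calc ∫ ω in A k, V ω * fh ω ∂P
              = ∫ ω in A k, (P[(fun ω => V ω * fh ω)|𝒢]) ω ∂P :=
                (setIntegral_condExp h𝒢 hVfint hAmG).symm
            _ = ∫ ω in A k, V ω * V ω ∂P := by
                refine integral_congr_ae ?_
                have h' : ∀ᵐ ω ∂P, ω ∈ A k →
                    (P[(fun ω => V ω * fh ω)|𝒢]) ω = V ω * V ω := by
                  filter_upwards [hmul, hae1] with ω hω h1 hA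
                  rw [hω, h1 hA]
                exact (ae_restrict_iff' hAm0).mpr h'
        -- second moment term
        have hIsq : ∫ ω in A k, fh ω ^ 2 ∂P ≤ ∫ ω in A k, V ω * V ω ∂P := by
          rw [← setIntegral_condExp h𝒢 hfsq hAmG]
          refine integral_mono_ae (integrable_condExp.restrict) (hVVint.restrict) ?_
          exact (ae_restrict_iff' hAm0).mpr hae2
        -- conclude (fh - V)² integrates to 0 on A k
        have hexp : (fun ω => (fh ω - V ω) ^ 2)
            = fun ω => fh ω ^ 2 - 2 * (V ω * fh ω) + V ω * V ω := by
          funext ω; ring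
        have hDint : Integrable (fun ω => (fh ω - V ω) ^ 2) (P.restrict (A k)) := by
          rw [hexp]
          exact ((hfsq.restrict).sub ((hVfint.const_mul 2).restrict)).add (hVVint.restrict)
        have h1 : Integrable (fun ω => fh ω ^ 2 - 2 * (V ω * fh ω)) (P.restrict (A k)) :=
          (hfsq.restrict).sub ((hVfint.const_mul 2).restrict)
        have h2 : Integrable (fun ω => V ω * V ω) (P.restrict (A k)) := hVVint.restrict
        have h3 : Integrable (fun ω => fh ω ^ 2) (P.restrict (A k)) := hfsq.restrict
        have h4 : Integrable (fun ω => 2 * (V ω * fh ω)) (P.restrict (A k)) :=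
          (hVfint.const_mul 2).restrict
        have hDval : ∫ ω in A k, (fh ω - V ω) ^ 2 ∂P ≤ 0 := by
          rw [hexp]
          rw [integral_add h1 h2, integral_sub h3 h4, integral_const_mul, hIcross]
          linarith [hIsq]
        have hDzero : ∀ᵐ ω ∂(P.restrict (A k)), (fh ω - V ω) ^ 2 = 0 := by
          have hnn : 0 ≤ᵐ[P.restrict (A k)] fun ω => (fh ω - V ω) ^ 2 :=
            ae_of_all _ fun ω => sq_nonneg _
          have heq0 : ∫ ω in A k, (fh ω - V ω) ^ 2 ∂P = 0 :=
            le_antisymm hDval (integral_nonneg fun ω => sq_nonneg _)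
          exact (integral_eq_zero_iff_of_nonneg_ae hnn hDint).mp heq0
        have := (ae_restrict_iff' hAm0).mp hDzero
        filter_upwards [this] with ω hω hA
        have h0 := hω hA
        have : fh ω - V ω = 0 := by
          have := sq_eq_zero_iff.mp h0
          exact this
        have hfv : fh ω = V ω := by linarith [this]
        exact hfv
      -- now the inductive step
      have hFe' : ∀ᵐ ω ∂P, ∀ j, ω ∈ A k → Fhat k ω j = Fbar (M k ω) j := ae_all_iff.mpr hFe
      filter_upwards [ih, hFe'] with ω hω hF hmem
      have hA : ω ∈ A k := (hBA k ω).mp hmem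
      have hn : n k ω = M k ω := hω (hAsubB k hA)
      funext j
      rw [hupdate k ω j, hn, hF j hA]
      simp only [hMdef, NseqRBC]
  -- main induction
  have main : ∀ k : ℕ, ∫ ω, Set.indicator (B k) (fun ω => wnormSq w (n k ω - nstar)) ω ∂P
      ≤ ρ ^ k * wnormSq w (n0 - nstar) := by
    intro k
    induction k with
    | zero =>
      have hall : ∀ ω : Ω, Set.indicator (B 0) (fun ω => wnormSq w (n 0 ω - nstar)) ω
          = wnormSq w (n0 - nstar) := by
        intro ω
        rw [Set.indicator_of_mem (by intro t ht; omega), hn0]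
      rw [integral_congr_ae (ae_of_all _ hall)]
      simp
    | succ k ih =>
      -- notation
      set Gv : (Fin N → ℝ) → (Fin N → ℝ) := fun x => (1 - a) • x + a • Fbar x with hGvdef
      set IA : Ω → ℝ := (A k).indicator (fun _ => (1:ℝ)) with hIAdef
      have hIAbd : ∀ ω, |IA ω| ≤ 1 := by
        intro ω; rw [hIAdef, Set.indicator_apply]; split_ifs <;> simp
      have hIAnn : ∀ ω, 0 ≤ IA ω := by
        intro ω; rw [hIAdef, Set.indicator_apply]; split_ifs <;> simp
      have hIAmeas : Measurable[ℱ k] IA := measurable_const.indicator (hA_meas k)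
      -- generic facts about functions IA * f(M k)
      have hIAfmeas : ∀ f : (Fin N → ℝ) → ℝ, Measurable[ℱ k] (fun ω => IA ω * f (M k ω)) :=
        fun f => hIAmeas.mul (hMm k f)
      have hIAfbdd : ∀ f : (Fin N → ℝ) → ℝ, ∃ C, ∀ ω, |IA ω * f (M k ω)| ≤ C := by
        intro f
        obtain ⟨C, hC⟩ := hMb k f
        refine ⟨C, fun ω => ?_⟩
        rw [abs_mul]
        calc |IA ω| * |f (M k ω)| ≤ 1 * C :=
              mul_le_mul (hIAbd ω) (hC ω) (abs_nonneg _) zero_le_one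
          _ = C := one_mul C
      have hIAfint : ∀ f : (Fin N → ℝ) → ℝ, Integrable (fun ω => IA ω * f (M k ω)) P :=
        fun f => hIntBdd _ (((hIAfmeas f).mono (ℱ.le k) le_rfl)) (hIAfbdd f)
      -- the blocks and per-coordinate functions
      set SS : Fin N → Finset (Finset (Fin N)) :=
        fun j => Finset.univ.filter (fun s : Finset (Fin N) => s.card = m ∧ j ∈ s) with hSSdef
      set gK : Fin N → Ω → ℝ := fun j ω => IA ω * (M k ω j - nstar j) ^ 2 with hgKdef
      set gH : Fin N → Ω → ℝ := fun j ω => IA ω * (Gv (M k ω) j - nstar j) ^ 2 with hgHdef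
      set gD : Fin N → Ω → ℝ := fun j ω =>
        IA ω * ((Gv (M k ω) j - nstar j) ^ 2 - (M k ω j - nstar j) ^ 2) with hgDdef
      have hgKint : ∀ j, Integrable (gK j) P := fun j => hIAfint (fun x => (x j - nstar j) ^ 2)
      have hgHint : ∀ j, Integrable (gH j) P := fun j => hIAfint (fun x => (Gv x j - nstar j) ^ 2)
      have hgDint : ∀ j, Integrable (gD j) P :=
        fun j => hIAfint (fun x => (Gv x j - nstar j) ^ 2 - (x j - nstar j) ^ 2)
      have hgDmeas : ∀ j, Measurable[ℱ k] (gD j) :=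
        fun j => hIAfmeas (fun x => (Gv x j - nstar j) ^ 2 - (x j - nstar j) ^ 2)
      have hESmeas : ∀ s : Finset (Fin N),
          Measurable[m0] (fun ω => if S k ω = s then (1:ℝ) else 0) :=
        fun s => Measurable.ite ((ℱ.le (k+1)) _ (hSm k s)) measurable_const measurable_const
      have hgDEint : ∀ j (s : Finset (Fin N)),
          Integrable (fun ω => gD j ω * (if S k ω = s then (1:ℝ) else 0)) P := by
        intro j s
        refine hIntBdd _ (((hgDmeas j).mono (ℱ.le k) le_rfl).mul (hESmeas s)) ?_
        obtain ⟨C, hC⟩ := hIAfbdd (fun x => (Gv x j - nstar j) ^ 2 - (x j - nstar j) ^ 2)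
        refine ⟨C, fun ω => ?_⟩
        rw [abs_mul]
        have h1 : |gD j ω| ≤ C := hC ω
        have h2 : |if S k ω = s then (1:ℝ) else 0| ≤ 1 := by split_ifs <;> simp
        calc |gD j ω| * |if S k ω = s then (1:ℝ) else 0| ≤ C * 1 :=
              mul_le_mul h1 h2 (abs_nonneg _) ((abs_nonneg _).trans h1)
          _ = C := mul_one C
      -- step 1: rewrite the integrand a.e.
      have hstep1 : ∫ ω, Set.indicator (B (k+1)) (fun ω => wnormSq w (n (k+1) ω - nstar)) ω ∂P
          = ∫ ω, IA ω * (∑ j, w j * (if j ∈ S k ω then (Gv (M k ω) j - nstar j) ^ 2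
              else (M k ω j - nstar j) ^ 2)) ∂P := by
        refine integral_congr_ae ?_
        filter_upwards [hnM (k+1)] with ω hω
        by_cases hmem : ω ∈ A k
        · have hmem' : ω ∈ B (k+1) := (hBA k ω).mpr hmem
          rw [Set.indicator_of_mem hmem', hIAdef, Set.indicator_of_mem hmem, one_mul,
            hω hmem']
          simp only [wnormSq, Pi.sub_apply]
          refine Finset.sum_congr rfl fun j _ => ?_
          have hMs : M (k+1) ω j = if j ∈ S k ω then
              (1 - a) * M k ω j + a * Fbar (M k ω) j else M k ω j := rfl
          rw [hMs]
          split_ifs with h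
          · have : Gv (M k ω) j = (1 - a) * M k ω j + a * Fbar (M k ω) j := by
              rw [hGvdef]; simp [smul_eq_mul]
            rw [this]
          · rfl
        · have hmem' : ω ∉ B (k+1) := fun h => hmem ((hBA k ω).mp h)
          rw [Set.indicator_of_notMem hmem', hIAdef, Set.indicator_of_notMem hmem, zero_mul]
      -- step 2: pointwise decomposition
      have hptw : ∀ ω, IA ω * (∑ j, w j * (if j ∈ S k ω then (Gv (M k ω) j - nstar j) ^ 2
              else (M k ω j - nstar j) ^ 2))
          = (∑ j, w j * gK j ω)
            + ∑ j, w j * (∑ s ∈ SS j, gD j ω * (if S k ω = s then (1:ℝ) else 0)) := by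
        intro ω
        have hchi : ∀ j : Fin N,
            (∑ s ∈ SS j, (if S k ω = s then (1:ℝ) else 0))
              = (if j ∈ S k ω then (1:ℝ) else 0) := by
          intro j
          rw [hSSdef]
          rw [Finset.sum_ite_eq]
          simp [hScard k ω]
        rw [Finset.mul_sum, ← Finset.sum_add_distrib]
        refine Finset.sum_congr rfl fun j _ => ?_
        rw [← Finset.mul_sum, hchi j, hgKdef, hgDdef]
        dsimp only
        split_ifs with h <;> ring
      -- step 3: integrate the decomposition
      have hf1int : Integrable (fun ω => ∑ j, w j * gK j ω) P :=
        integrable_finset_sum _ (fun j _ => (hgKint j).const_mul _)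
      have hf2int : Integrable (fun ω => ∑ j, w j *
          (∑ s ∈ SS j, gD j ω * (if S k ω = s then (1:ℝ) else 0))) P :=
        integrable_finset_sum _ (fun j _ =>
          ((integrable_finset_sum _ (fun s _ => hgDEint j s)).const_mul _))
      have hstep2 : ∫ ω, IA ω * (∑ j, w j * (if j ∈ S k ω then (Gv (M k ω) j - nstar j) ^ 2
              else (M k ω j - nstar j) ^ 2)) ∂P
          = (∑ j, w j * ∫ ω, gK j ω ∂P) + ∑ j, w j * (r * ∫ ω, gD j ω ∂P) := by
        rw [integral_congr_ae (ae_of_all _ hptw), integral_add hf1int hf2int]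
        congr 1
        · rw [integral_finset_sum _ (fun j _ => (hgKint j).const_mul _)]
          exact Finset.sum_congr rfl fun j _ => integral_const_mul _ _
        · rw [integral_finset_sum _ (fun j _ =>
            ((integrable_finset_sum _ (fun s _ => hgDEint j s)).const_mul _))]
          refine Finset.sum_congr rfl fun j _ => ?_
          rw [integral_const_mul]
          congr 1
          rw [integral_finset_sum _ (fun s _ => hgDEint j s)]
          have hterm : ∀ s ∈ SS j, ∫ ω, gD j ω * (if S k ω = s then (1:ℝ) else 0) ∂P
              = (1 / (N.choose m : ℝ)) * ∫ ω, gD j ω ∂P := by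
            intro s hs
            have hs' : s.card = m := by
              rw [hSSdef] at hs
              exact (Finset.mem_filter.mp hs).2.1
            exact hpull k (gD j) (hgDmeas j) (hgDint j) s hs'
          rw [Finset.sum_congr rfl hterm, Finset.sum_const]
          have hcard : (SS j).card = (N - 1).choose (m - 1) := by
            rw [hSSdef]; exact count_subsets_containing hm1 j
          rw [hcard, nsmul_eq_mul, ← mul_assoc, hratio]
      -- step 4: split gD integrals
      have hgDsplit : ∀ j, ∫ ω, gD j ω ∂P = (∫ ω, gH j ω ∂P) - ∫ ω, gK j ω ∂P := by
        intro j
        have h : gD j = fun ω => gH j ω - gK j ω := by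
          funext ω; rw [hgDdef, hgHdef, hgKdef]; dsimp only; ring
        rw [h, integral_sub (hgHint j) (hgKint j)]
      -- step 5: resum
      have hIAKint : Integrable (fun ω => IA ω * wnormSq w (M k ω - nstar)) P :=
        hIAfint (fun x => wnormSq w (x - nstar))
      have hIAHint : Integrable (fun ω => IA ω * wnormSq w (Gv (M k ω) - nstar)) P :=
        hIAfint (fun x => wnormSq w (Gv x - nstar))
      have hKK : ∑ j, w j * ∫ ω, gK j ω ∂P = ∫ ω, IA ω * wnormSq w (M k ω - nstar) ∂P := by
        have h : (fun ω => IA ω * wnormSq w (M k ω - nstar)) = fun ω => ∑ j, w j * gK j ω := by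
          funext ω
          simp only [wnormSq, Pi.sub_apply, hgKdef]
          rw [Finset.mul_sum]
          exact Finset.sum_congr rfl fun j _ => by ring
        rw [h, integral_finset_sum _ (fun j _ => (hgKint j).const_mul _)]
        exact Finset.sum_congr rfl fun j _ => (integral_const_mul _ _).symm
      have hHH : ∑ j, w j * ∫ ω, gH j ω ∂P
          = ∫ ω, IA ω * wnormSq w (Gv (M k ω) - nstar) ∂P := by
        have h : (fun ω => IA ω * wnormSq w (Gv (M k ω) - nstar))
            = fun ω => ∑ j, w j * gH j ω := by
          funext ω
          simp only [wnormSq, Pi.sub_apply, hgHdef]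
          rw [Finset.mul_sum]
          exact Finset.sum_congr rfl fun j _ => by ring
        rw [h, integral_finset_sum _ (fun j _ => (hgHint j).const_mul _)]
        exact Finset.sum_congr rfl fun j _ => (integral_const_mul _ _).symm
      have hsum2 : ∑ j, w j * (r * ∫ ω, gD j ω ∂P)
          = r * ((∑ j, w j * ∫ ω, gH j ω ∂P) - ∑ j, w j * ∫ ω, gK j ω ∂P) := by
        simp only [hgDsplit]
        rw [← Finset.sum_sub_distrib, Finset.mul_sum]
        exact Finset.sum_congr rfl fun j _ => by ring
      -- step 6: contraction bound
      have hcontrI : ∫ ω, IA ω * wnormSq w (Gv (M k ω) - nstar) ∂P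
          ≤ c ^ 2 * ∫ ω, IA ω * wnormSq w (M k ω - nstar) ∂P := by
        have hae : ∀ᵐ ω ∂P, IA ω * wnormSq w (Gv (M k ω) - nstar)
            ≤ c ^ 2 * (IA ω * wnormSq w (M k ω - nstar)) := by
          filter_upwards [hnM k] with ω hω
          by_cases hmem : ω ∈ A k
          · have h1 : IA ω = 1 := by rw [hIAdef]; exact Set.indicator_of_mem hmem _
            rw [h1, one_mul, one_mul]
            have hball : wnorm w (M k ω - nstar) ≤ γ := by
              rw [← hω (hAsubB k hmem)]
              exact hmem k le_rfl
            have hc1 := hcontr (M k ω) hball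
            have hsq := pow_le_pow_left₀ (hwnorm_nonneg _) hc1 2
            rw [mul_pow, hwnorm_sq, hwnorm_sq] at hsq
            exact hsq
          · have h0 : IA ω = 0 := by rw [hIAdef]; exact Set.indicator_of_notMem hmem _
            rw [h0]; simp
        have h := integral_mono_ae hIAHint (hIAKint.const_mul (c ^ 2)) hae
        rwa [integral_const_mul] at h
      -- step 7: compare with the indicator of B k
      have hKint2 : Integrable (Set.indicator (B k) (fun ω => wnormSq w (n k ω - nstar))) P := by
        have hMint : Integrable (Set.indicator (B k)
            (fun ω => wnormSq w (M k ω - nstar))) P := by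
          refine hIntBdd _ ?_ ?_
          · exact ((hMm k (fun x => wnormSq w (x - nstar))).indicator
              (hB_meas k)).mono (ℱ.le k) le_rfl
          · obtain ⟨C, hC⟩ := hMb k (fun x => wnormSq w (x - nstar))
            refine ⟨C, fun ω => ?_⟩
            rw [Set.indicator_apply]
            split_ifs with h
            · exact hC ω
            · simpa using (abs_nonneg _).trans (hC ω)
        refine hMint.congr ?_
        filter_upwards [hnM k] with ω hω
        by_cases hmem : ω ∈ B k
        · rw [Set.indicator_of_mem hmem, Set.indicator_of_mem hmem, hω hmem]
        · rw [Set.indicator_of_notMem hmem, Set.indicator_of_notMem hmem]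
      have hstep7 : ∫ ω, IA ω * wnormSq w (M k ω - nstar) ∂P
          ≤ ∫ ω, Set.indicator (B k) (fun ω => wnormSq w (n k ω - nstar)) ω ∂P := by
        refine integral_mono_ae hIAKint hKint2 ?_
        filter_upwards [hnM k] with ω hω
        by_cases hmem : ω ∈ A k
        · have h1 : IA ω = 1 := by rw [hIAdef]; exact Set.indicator_of_mem hmem _
          have hB : ω ∈ B k := hAsubB k hmem
          rw [h1, one_mul, Set.indicator_of_mem hB, hω hB]
        · have h0 : IA ω = 0 := by rw [hIAdef]; exact Set.indicator_of_notMem hmem _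
          rw [h0, zero_mul]
          exact Set.indicator_apply_nonneg fun _ => hwsq_nonneg _
      -- conclude
      have hfinal : ∫ ω, Set.indicator (B (k+1))
            (fun ω => wnormSq w (n (k+1) ω - nstar)) ω ∂P
          = (∫ ω, IA ω * wnormSq w (M k ω - nstar) ∂P)
            + r * ((∫ ω, IA ω * wnormSq w (Gv (M k ω) - nstar) ∂P)
              - ∫ ω, IA ω * wnormSq w (M k ω - nstar) ∂P) := by
        rw [hstep1, hstep2, hsum2, hKK, hHH]
      set X : ℝ := ∫ ω, IA ω * wnormSq w (M k ω - nstar) ∂P with hXdef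
      set Y : ℝ := ∫ ω, IA ω * wnormSq w (Gv (M k ω) - nstar) ∂P with hYdef
      calc ∫ ω, Set.indicator (B (k+1)) (fun ω => wnormSq w (n (k+1) ω - nstar)) ω ∂P
          = X + r * (Y - X) := hfinal
        _ ≤ X + r * (c ^ 2 * X - X) := by
            have h1 : Y - X ≤ c ^ 2 * X - X := sub_le_sub_right hcontrI X
            have h2 := mul_le_mul_of_nonneg_left h1 hr0
            linarith
        _ = ρ * X := by rw [hρr]; ring
        _ ≤ ρ * ∫ ω, Set.indicator (B k) (fun ω => wnormSq w (n k ω - nstar)) ω ∂P :=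
            mul_le_mul_of_nonneg_left hstep7 hρ0
        _ ≤ ρ * (ρ ^ k * wnormSq w (n0 - nstar)) := mul_le_mul_of_nonneg_left ih hρ0
        _ = ρ ^ (k+1) * wnormSq w (n0 - nstar) := by ring
  intro k _
  exact main k
end
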